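/- arXiv:1307.7666 — 3 statements merged into one kernel-verified Lean document; each statement's English description precedes it below -/
import Mathlib

section
/- Coupon collector asymptotics: let X_m be the number of i.i.d. uniform draws from {1,…,m} needed until every element of {1,…,m} has been drawn at least once. Then for any fixed constant c ∈ ℝ, with n(m) = m·log m - c·m, one has lim_{m→∞} P(X_m > n(m)) = 1 - exp(-exp(c)). -/
open Real Filter
open Finset Topology

lemma mem_finset_inf {ι α : Type*} [DecidableEq α] [Fintype α] {s : Finset ι}
    {f : ι → Finset α} {a : α} : a ∈ s.inf f ↔ ∀ i ∈ s, a ∈ f i := by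
  induction s using Finset.cons_induction <;> simp [*]

lemma card_surj_eq (m n : ℕ) :
    (Nat.card {f : Fin n → Fin m // Function.Surjective f} : ℤ) =
      ∑ k ∈ range (m + 1), (-1 : ℤ) ^ k * (m.choose k) * ((m - k : ℕ) : ℤ) ^ n := by
  classical
  set S : Fin m → Finset (Fin n → Fin m) :=
    fun j => univ.filter (fun f => ∀ i, f i ≠ j) with hS
  have hsurj : (univ.filter (fun f : Fin n → Fin m => Function.Surjective f))
      = (univ : Finset (Fin m)).inf fun j => (S j)ᶜ := by
    ext f
    simp [Function.Surjective, S, mem_finset_inf, eq_comm]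
  have hinner : ∀ t : Finset (Fin m), (t.inf S).card = (m - t.card) ^ n := by
    intro t
    have : t.inf S = Fintype.piFinset (fun _ : Fin n => tᶜ) := by
      ext f
      simp only [mem_finset_inf, Fintype.mem_piFinset, Finset.mem_compl, S, mem_filter,
        mem_univ, true_and]
      aesop
    rw [this, Fintype.card_piFinset]
    simp [Finset.card_compl]
  have hcard : Nat.card {f : Fin n → Fin m // Function.Surjective f}
      = (univ.filter (fun f : Fin n → Fin m => Function.Surjective f)).card := by
    rw [Nat.card_eq_fintype_card, Fintype.card_subtype]
  rw [hcard, hsurj]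
  rw [Finset.inclusion_exclusion_card_inf_compl]
  rw [Finset.sum_powerset]
  refine Finset.sum_congr (by simp) fun k hk => ?_
  have h1 : ∀ t ∈ powersetCard k (univ : Finset (Fin m)),
      (-1:ℤ) ^ t.card * (t.inf S).card = (-1)^k * ((m - k : ℕ) : ℤ)^n := by
    intro t ht
    rw [hinner t, (Finset.mem_powersetCard.1 ht).2]
    push_cast
    ring
  rw [Finset.sum_congr rfl h1, Finset.sum_const, card_powersetCard]
  simp [card_univ]
  ring

noncomputable def ccN (c : ℝ) (m : ℕ) : ℕ := ⌊(m : ℝ) * Real.log m - c * m⌋₊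

lemma tendsto_A (k : ℕ) :
    Tendsto (fun m : ℕ => (m.choose k : ℝ) * k.factorial / (m:ℝ)^k) atTop (𝓝 1) := by
  have h : ∀ᶠ m : ℕ in atTop, (m.choose k : ℝ) * k.factorial / (m:ℝ)^k
      = ∏ i ∈ range k, (1 - (i:ℝ)/m) := by
    filter_upwards [eventually_ge_atTop k, eventually_ge_atTop 1] with m hm hm1
    have hm0 : (m:ℝ) ≠ 0 := by positivity
    have h1 : (m.choose k : ℝ) * k.factorial = ∏ i ∈ range k, ((m - i : ℕ) : ℝ) := by
      rw [← Nat.cast_prod, ← Nat.descFactorial_eq_prod_range,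
        Nat.descFactorial_eq_factorial_mul_choose]
      push_cast; ring
    rw [h1, show ((m:ℝ))^k = ∏ _i ∈ range k, (m:ℝ) by simp, ← Finset.prod_div_distrib]
    refine Finset.prod_congr rfl fun i hi => ?_
    have hik : i ≤ m := le_trans (Finset.mem_range.1 hi).le hm
    rw [Nat.cast_sub hik, sub_div, div_self hm0]
  have : Tendsto (fun m : ℕ => ∏ i ∈ range k, (1 - (i:ℝ)/m)) atTop (𝓝 (∏ _i ∈ range k, (1:ℝ))) := by
    refine tendsto_finset_prod _ fun i _ => ?_
    simpa using tendsto_const_nhds.sub (tendsto_const_div_atTop_nhds_zero_nat (i:ℝ))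
  rw [show (1:ℝ) = ∏ _i ∈ range k, (1:ℝ) by simp]
  exact Tendsto.congr' (EventuallyEq.symm h) this

lemma tendsto_log_div_nat : Tendsto (fun m : ℕ => Real.log m / m) atTop (𝓝 0) :=
  (Real.isLittleO_log_id_atTop.tendsto_div_nhds_zero).comp tendsto_natCast_atTop_atTop

lemma tendsto_E (c : ℝ) (k : ℕ) :
    Tendsto (fun m : ℕ => (k:ℝ) * Real.log m + (ccN c m : ℝ) * Real.log (1 - k/m))
      atTop (𝓝 (k * c)) := by
  set δ : ℕ → ℝ := fun m => (m:ℝ) * Real.log m - c * m - ccN c m with hδ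
  set r : ℕ → ℝ := fun m => Real.log (1 - (k:ℝ)/m) + k/m with hr
  have hy : ∀ᶠ m : ℕ in atTop, (0:ℝ) ≤ (m:ℝ) * Real.log m - c * m := by
    have hlog : Tendsto (fun m : ℕ => Real.log m) atTop atTop :=
      Real.tendsto_log_atTop.comp tendsto_natCast_atTop_atTop
    filter_upwards [hlog.eventually_ge_atTop c, eventually_ge_atTop 1] with m h1 h2
    have : (0:ℝ) ≤ (m:ℝ) := by positivity
    nlinarith
  -- identity
  have hid : ∀ᶠ m : ℕ in atTop,
      (k:ℝ) * Real.log m + (ccN c m : ℝ) * Real.log (1 - k/m)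
        = k * c + k * δ m / m + (ccN c m : ℝ) * r m := by
    filter_upwards [eventually_ge_atTop 1] with m hm1
    have hm0 : (m:ℝ) ≠ 0 := by positivity
    have : Real.log (1 - (k:ℝ)/m) = r m - (k:ℝ)/m := by simp [hr]
    rw [this]
    have hδm : (ccN c m : ℝ) = (m:ℝ) * Real.log m - c * m - δ m := by simp [hδ]
    rw [mul_sub, hδm]
    field_simp
    ring
  -- δ bounds
  have hδ0 : ∀ᶠ m : ℕ in atTop, 0 ≤ δ m ∧ δ m < 1 := by
    filter_upwards [hy] with m hym
    constructor
    · have := Nat.floor_le hym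
      simp only [hδ, ccN]
      linarith [this]
    · have := Nat.sub_one_lt_floor ((m:ℝ) * Real.log m - c * m)
      simp only [hδ, ccN]
      linarith [this]
  have h1 : Tendsto (fun m : ℕ => (k:ℝ) * δ m / m) atTop (𝓝 0) := by
    apply squeeze_zero' (g := fun m : ℕ => (k:ℝ) / m)
    · filter_upwards [hδ0, eventually_ge_atTop 1] with m hd hm1
      exact div_nonneg (mul_nonneg (Nat.cast_nonneg k) hd.1) (Nat.cast_nonneg m)
    · filter_upwards [hδ0, eventually_ge_atTop 1] with m hd hm1
      have hm0 : (0:ℝ) < (m:ℝ) := by positivity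
      rw [div_le_div_iff₀ hm0 hm0]
      have hk0 : (0:ℝ) ≤ (k:ℝ) := Nat.cast_nonneg k
      have h2 : (k:ℝ) * δ m ≤ k * 1 := mul_le_mul_of_nonneg_left hd.2.le hk0
      nlinarith
    · exact tendsto_const_div_atTop_nhds_zero_nat _
  have h2 : Tendsto (fun m : ℕ => (ccN c m : ℝ) * r m) atTop (𝓝 0) := by
    have hbd : ∀ᶠ m : ℕ in atTop,
        |(ccN c m : ℝ) * r m| ≤ (2 * k^2 + 2 * k^2 * |c|) * ((Real.log m + 1) / m) := by
      filter_upwards [hy, eventually_ge_atTop (2 * k + 2),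
        (Real.tendsto_log_atTop.comp tendsto_natCast_atTop_atTop).eventually_ge_atTop 0]
        with m hym hm2 hlog0
      have hmp : 0 < m := by omega
      have hm0 : (0:ℝ) < (m:ℝ) := by exact_mod_cast hmp
      have hkm : (k:ℝ) / m ≤ 1/2 := by
        rw [div_le_div_iff₀ hm0 two_pos]
        have : (2*k+2 : ℝ) ≤ (m:ℝ) := by exact_mod_cast Nat.cast_le.mpr hm2
        linarith
      have hx0 : (0:ℝ) ≤ (k:ℝ)/m := by positivity
      have hxabs : |(k:ℝ)/m| < 1 := by rw [abs_of_nonneg hx0]; linarith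
      -- bound |r m|
      have hrle : |r m| ≤ 2 * (k:ℝ)^2 / m^2 := by
        have := Real.abs_log_sub_add_sum_range_le hxabs 1
        simp only [Finset.range_one, Finset.sum_singleton, pow_one, Nat.cast_one, div_one,
          zero_add] at this
        have h1x : (1:ℝ)/2 ≤ 1 - |(k:ℝ)/m| := by rw [abs_of_nonneg hx0]; linarith
        have hr' : |r m| ≤ |(k:ℝ)/m|^2 / (1 - |(k:ℝ)/m|) := by
          simpa [hr, add_comm] using this
        calc |r m| ≤ |(k:ℝ)/m|^2 / (1 - |(k:ℝ)/m|) := hr'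
          _ ≤ |(k:ℝ)/m|^2 / (1/2) := by
              apply div_le_div_of_nonneg_left (by positivity) (by norm_num) h1x
          _ = 2 * (k:ℝ)^2 / m^2 := by
              rw [abs_of_nonneg hx0, div_pow]; ring
      have hccle : (ccN c m : ℝ) ≤ (m:ℝ) * Real.log m + |c| * m := by
        have := Nat.floor_le hym
        have : (ccN c m : ℝ) ≤ (m:ℝ) * Real.log m - c * m := this
        have hc : -(|c|) ≤ c := neg_abs_le c
        nlinarith
      have hcc0 : (0:ℝ) ≤ (ccN c m : ℝ) := Nat.cast_nonneg _
      rw [abs_mul, abs_of_nonneg hcc0]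
      calc (ccN c m : ℝ) * |r m| ≤ ((m:ℝ) * Real.log m + |c| * m) * (2 * (k:ℝ)^2 / m^2) := by
            apply mul_le_mul hccle hrle (abs_nonneg _)
            have hl0 : (0:ℝ) ≤ Real.log m := hlog0
            have hc0 : (0:ℝ) ≤ |c| := abs_nonneg c
            nlinarith
        _ = (2 * k^2 * Real.log m + 2 * k^2 * |c|) / m := by field_simp
        _ ≤ (2 * k^2 + 2 * k^2 * |c|) * ((Real.log m + 1) / m) := by
            rw [← mul_div_assoc, div_le_div_iff₀ hm0 hm0]
            have hl0 : (0:ℝ) ≤ Real.log m := hlog0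
            have hk0 : (0:ℝ) ≤ (k:ℝ) := Nat.cast_nonneg k
            nlinarith [mul_nonneg (mul_nonneg (mul_nonneg (sq_nonneg (k:ℝ)) (abs_nonneg c)) hl0) hm0.le,
              mul_nonneg (sq_nonneg (k:ℝ)) hm0.le]
    have hg : Tendsto (fun m : ℕ => (2 * (k:ℝ)^2 + 2 * k^2 * |c|) * ((Real.log m + 1) / m))
        atTop (𝓝 0) := by
      have : Tendsto (fun m : ℕ => (Real.log m + 1) / m) atTop (𝓝 0) := by
        have := tendsto_log_div_nat.add (tendsto_const_div_atTop_nhds_zero_nat 1)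
        simpa [add_div] using this
      simpa using this.const_mul (2 * (k:ℝ)^2 + 2 * k^2 * |c|)
    refine squeeze_zero_norm' ?_ hg
    filter_upwards [hbd] with m h
    simpa [Real.norm_eq_abs, abs_mul, Nat.abs_cast] using h
  have := ((tendsto_const_nhds (x := (k:ℝ) * c)).add h1).add h2
  simp only [add_zero] at this
  exact Tendsto.congr' (EventuallyEq.symm hid) this

lemma tendsto_B (c : ℝ) (k : ℕ) :
    Tendsto (fun m : ℕ => (m:ℝ)^k * (1 - (k:ℝ)/m)^(ccN c m)) atTop (𝓝 (Real.exp (k * c))) := by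
  have heq : ∀ᶠ m : ℕ in atTop, (m:ℝ)^k * (1 - (k:ℝ)/m)^(ccN c m)
      = Real.exp ((k:ℝ) * Real.log m + (ccN c m : ℝ) * Real.log (1 - k/m)) := by
    filter_upwards [eventually_gt_atTop k] with m hm
    have hm0 : (0:ℝ) < (m:ℝ) := by
      have : 0 < m := Nat.lt_of_le_of_lt (Nat.zero_le k) hm
      exact_mod_cast this
    have hx : (0:ℝ) < 1 - (k:ℝ)/m := by
      rw [sub_pos, div_lt_one hm0]
      exact_mod_cast hm
    rw [Real.exp_add, Real.exp_nat_mul, Real.exp_nat_mul, Real.exp_log hm0, Real.exp_log hx]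
  exact Tendsto.congr' (EventuallyEq.symm heq) ((Real.continuous_exp.tendsto _).comp (tendsto_E c k))

lemma tendsto_term (c : ℝ) (k : ℕ) :
    Tendsto (fun m : ℕ => (m.choose k : ℝ) * (1 - (k:ℝ)/m)^(ccN c m)) atTop
      (𝓝 (Real.exp (k * c) / k.factorial)) := by
  have heq : ∀ᶠ m : ℕ in atTop, (m.choose k : ℝ) * (1 - (k:ℝ)/m)^(ccN c m)
      = ((m.choose k : ℝ) * k.factorial / (m:ℝ)^k) * ((m:ℝ)^k * (1 - (k:ℝ)/m)^(ccN c m))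
          / k.factorial := by
    filter_upwards [eventually_ge_atTop 1] with m hm
    have hm0 : (m:ℝ) ≠ 0 := by positivity
    have hf : (k.factorial : ℝ) ≠ 0 := by positivity
    field_simp
  have := ((tendsto_A k).mul (tendsto_B c k)).div_const (k.factorial : ℝ)
  rw [one_mul] at this
  exact Tendsto.congr' (EventuallyEq.symm heq) this

/-- The probability, under i.i.d. uniform draws `X_1, …, X_n` from `{1,…,m}`
(equivalently, a uniformly random function `Fin n → Fin m`), that some coupon
is missed, i.e. that the first `n` draws do not cover `{1,…,m}`; this is the
event `{X_m > n}` where `X_m` is the coupon-collector stopping time. -/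
noncomputable def couponMissProb (m n : ℕ) : ℝ :=
  (Nat.card {f : Fin n → Fin m // ¬ Function.Surjective f} : ℝ) / (m : ℝ) ^ n

lemma couponMissProb_eq (m n : ℕ) (hm : 0 < m) :
    couponMissProb m n
      = 1 - ∑ k ∈ range (m + 1), (-1 : ℝ) ^ k * (m.choose k) * (1 - k / m) ^ n := by
  classical
  have hmn : (0:ℝ) < (m:ℝ) ^ n := by positivity
  have hcompl : Nat.card {f : Fin n → Fin m // ¬ Function.Surjective f}
      = m ^ n - Nat.card {f : Fin n → Fin m // Function.Surjective f} := by
    rw [Nat.card_eq_fintype_card, Nat.card_eq_fintype_card, Fintype.card_subtype_compl]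
    congr 1
    simp [Fintype.card_fun]
  have hle : Nat.card {f : Fin n → Fin m // Function.Surjective f} ≤ m ^ n := by
    rw [Nat.card_eq_fintype_card]
    calc Fintype.card {f : Fin n → Fin m // Function.Surjective f}
        ≤ Fintype.card (Fin n → Fin m) := Fintype.card_subtype_le _
      _ = m ^ n := by simp [Fintype.card_fun]
  have hS : ((Nat.card {f : Fin n → Fin m // Function.Surjective f} : ℝ))
      = ∑ k ∈ range (m + 1), (-1 : ℝ) ^ k * (m.choose k) * ((m - k : ℕ) : ℝ) ^ n := by
    have := card_surj_eq m n
    have h2 : ((Nat.card {f : Fin n → Fin m // Function.Surjective f} : ℤ) : ℝ)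
        = ((∑ k ∈ range (m + 1), (-1 : ℤ) ^ k * (m.choose k) * ((m - k : ℕ) : ℤ) ^ n : ℤ) : ℝ) := by
      exact_mod_cast congrArg (fun z : ℤ => (z : ℝ)) this
    push_cast at h2 ⊢
    convert h2 using 2
  rw [couponMissProb, hcompl]
  rw [Nat.cast_sub hle]
  rw [sub_div, hS, eq_sub_iff_add_eq]
  have hterm : ∀ k ∈ range (m + 1),
      (-1 : ℝ) ^ k * (m.choose k) * ((m - k : ℕ) : ℝ) ^ n / (m:ℝ) ^ n
        = (-1 : ℝ) ^ k * (m.choose k) * (1 - k / m) ^ n := by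
    intro k hk
    have hkm : k ≤ m := Nat.lt_succ_iff.1 (mem_range.1 hk)
    have : ((m - k : ℕ) : ℝ) = (m : ℝ) - k := by
      push_cast [Nat.cast_sub hkm]; ring
    rw [this, mul_div_assoc, ← div_pow]
    congr 2
    field_simp
  rw [Finset.sum_div, Finset.sum_congr rfl hterm]
  field_simp
  push_cast; ring

noncomputable def G (c : ℝ) (m k : ℕ) : ℝ :=
  if k ≤ m then (-1:ℝ)^k * (m.choose k) * (1 - (k:ℝ)/m)^(ccN c m) else 0

lemma tendsto_tsum_G (c : ℝ) :
    Tendsto (fun m : ℕ => ∑' k : ℕ, G c m k) atTop (𝓝 (Real.exp (-Real.exp c))) := by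
  have hlim : Real.exp (-Real.exp c)
      = ∑' k : ℕ, (-1:ℝ)^k * (Real.exp (k * c) / k.factorial) := by
    rw [congrFun Real.exp_eq_exp_ℝ (-Real.exp c), NormedSpace.exp_eq_tsum_div]
    refine tsum_congr fun k => ?_
    rw [neg_pow, Real.exp_nat_mul]
    ring
  rw [hlim]
  apply tendsto_tsum_of_dominated_convergence
    (bound := fun k : ℕ => Real.exp (c+1) ^ k / k.factorial)
  · exact Real.summable_pow_div_factorial (Real.exp (c+1))
  · intro k
    have heq : ∀ᶠ m : ℕ in atTop,
        (-1:ℝ)^k * ((m.choose k : ℝ) * (1 - (k:ℝ)/m)^(ccN c m)) = G c m k := by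
      filter_upwards [eventually_ge_atTop k] with m hm
      rw [G, if_pos hm]
      ring
    exact Tendsto.congr' heq ((tendsto_term c k).const_mul ((-1:ℝ)^k))
  · filter_upwards [eventually_ge_atTop 1] with m hm1
    intro k
    by_cases hk : k ≤ m
    · have hmp : 0 < m := hm1
      have hm0 : (0:ℝ) < (m:ℝ) := by exact_mod_cast hmp
      have h1m : (1:ℝ) ≤ (m:ℝ) := by exact_mod_cast hm1
      have h01 : (0:ℝ) ≤ 1 - (k:ℝ)/m := by
        rw [sub_nonneg, div_le_one hm0]
        exact_mod_cast hk
      have hk0 : (0:ℝ) ≤ (k:ℝ) := Nat.cast_nonneg k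
      have hGnorm : ‖G c m k‖ = (m.choose k:ℝ) * (1-(k:ℝ)/m)^(ccN c m) := by
        simp only [G, if_pos hk]
        rw [norm_mul, norm_mul, norm_pow, norm_neg, norm_one, one_pow, one_mul,
          Real.norm_natCast, Real.norm_of_nonneg (pow_nonneg h01 _)]
      have hexp : (ccN c m : ℝ) * (-((k:ℝ)/m)) ≤ k*(c+1) - k * Real.log m := by
        rw [mul_neg, neg_le, neg_sub, ← mul_div_assoc, le_div_iff₀ hm0]
        have hN : (m:ℝ)*Real.log m - c*m - 1 < (ccN c m : ℝ) := by
          have := Nat.sub_one_lt_floor ((m:ℝ) * Real.log m - c * m)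
          simpa [ccN] using this
        nlinarith [mul_le_mul_of_nonneg_left hN.le hk0, mul_le_mul_of_nonneg_left h1m hk0]
      have h1exp : 1 - (k:ℝ)/m ≤ Real.exp (-((k:ℝ)/m)) := by
        have := Real.add_one_le_exp (-((k:ℝ)/m))
        linarith
      have hp' : (1-(k:ℝ)/m)^(ccN c m) ≤ Real.exp (c+1)^k / (m:ℝ)^k := by
        calc (1-(k:ℝ)/m)^(ccN c m) ≤ (Real.exp (-((k:ℝ)/m)))^(ccN c m) :=
              pow_le_pow_left₀ h01 h1exp _
          _ = Real.exp ((ccN c m : ℝ) * (-((k:ℝ)/m))) := (Real.exp_nat_mul _ _).symm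
          _ ≤ Real.exp ((k:ℝ)*(c+1) - k * Real.log m) := Real.exp_le_exp.mpr hexp
          _ = Real.exp (c+1)^k / (m:ℝ)^k := by
              rw [Real.exp_sub, Real.exp_nat_mul, Real.exp_nat_mul, Real.exp_log hm0]
      have hC : (m.choose k : ℝ) ≤ (m:ℝ)^k / k.factorial := Nat.choose_le_pow_div k m
      rw [hGnorm]
      calc (m.choose k:ℝ) * (1-(k:ℝ)/m)^(ccN c m)
          ≤ ((m:ℝ)^k / k.factorial) * (Real.exp (c+1)^k / (m:ℝ)^k) :=
            mul_le_mul hC hp' (pow_nonneg h01 _) (by positivity)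
        _ = Real.exp (c+1)^k / k.factorial := by
            have : (m:ℝ)^k ≠ 0 := by positivity
            field_simp
    · rw [G, if_neg hk]
      simp only [norm_zero]
      positivity


/-- Coupon collector asymptotics (Motwani–Raghavan, Thm 3.8): for any fixed `c ∈ ℝ`,
with `n(m) = m·log m - c·m` draws, `P(X_m > n(m)) → 1 - exp(-exp(c))` as `m → ∞`. -/
theorem coupon_collector_limit (c : ℝ) :
    Tendsto (fun m : ℕ => couponMissProb m ⌊(m : ℝ) * Real.log m - c * m⌋₊)
      atTop (nhds (1 - Real.exp (-Real.exp c))) := by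
  have key : Tendsto (fun m : ℕ => 1 - ∑' k : ℕ, G c m k) atTop
      (𝓝 (1 - Real.exp (-Real.exp c))) := tendsto_const_nhds.sub (tendsto_tsum_G c)
  refine Tendsto.congr' ?_ key
  filter_upwards [eventually_ge_atTop 1] with m hm
  have hsum : ∑' k : ℕ, G c m k
      = ∑ k ∈ range (m + 1), (-1 : ℝ) ^ k * (m.choose k) * (1 - (k:ℝ) / m) ^ (ccN c m) := by
    rw [tsum_eq_sum (s := range (m+1)) (fun k hk => ?_)]
    · refine Finset.sum_congr rfl fun k hk => ?_
      rw [G, if_pos (Nat.lt_succ_iff.1 (mem_range.1 hk))]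
    · rw [G, if_neg]
      simp only [mem_range] at hk
      omega
  rw [hsum, ← couponMissProb_eq m (ccN c m) hm]
  rfl
end

section
/- For fixed δ ∈ (0,1) and n(m) = m·log m + m·log(1/δ), the probability that n(m) i.i.d. uniform draws from {1,…,m} fail to cover {1,…,m} converges to 1 - exp(-δ) as m → ∞. -/
open Real Filter

open Finset

lemma mem_finset_inf_s11 {α β : Type*} [DecidableEq β] [Fintype β] {t : Finset α} {S : α → Finset β}
    {b : β} : b ∈ t.inf S ↔ ∀ i ∈ t, b ∈ S i := by
  classical
  induction t using Finset.induction with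
  | empty => simp
  | insert _ _ h ih => simp [Finset.inf_insert, ih]

lemma card_surj (m n : ℕ) :
    (Nat.card {f : Fin n → Fin m // Function.Surjective f} : ℤ) =
      ∑ k ∈ Finset.range (m + 1), (-1 : ℤ) ^ k * (m.choose k) * ((m - k : ℕ) ^ n : ℕ) := by
  classical
  set S : Fin m → Finset (Fin n → Fin m) :=
    fun i => Finset.univ.filter (fun g => ∀ j, g j ≠ i) with hS
  have hmem : ∀ f : Fin n → Fin m, Function.Surjective f ↔
      f ∈ (Finset.univ.inf fun i => (S i)ᶜ) := by
    intro f
    simp [mem_finset_inf_s11, hS, Function.Surjective, eq_comm]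
  have hcard : Nat.card {f : Fin n → Fin m // Function.Surjective f} =
      #(Finset.univ.inf fun i => (S i)ᶜ) := by
    rw [Nat.card_eq_fintype_card, Fintype.card_subtype]
    congr 1
    ext f
    simp [hmem f]
  rw [hcard, Finset.inclusion_exclusion_card_inf_compl]
  have hinf : ∀ t : Finset (Fin m), #(t.inf S) = (m - #t) ^ n := by
    intro t
    have : t.inf S = Fintype.piFinset (fun _ : Fin n => tᶜ) := by
      ext f
      simp only [mem_finset_inf_s11, hS, Fintype.mem_piFinset, Finset.mem_filter,
        Finset.mem_univ, true_and, Finset.mem_compl]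
      constructor
      · intro h j ht
        exact h (f j) ht j rfl
      · intro h i hi j hj
        exact h j (hj ▸ hi)
    rw [this, Fintype.card_piFinset]
    simp [Finset.card_compl]
  calc ∑ t ∈ (Finset.univ : Finset (Fin m)).powerset, (-1 : ℤ) ^ #t * #(t.inf S)
      = ∑ t ∈ (Finset.univ : Finset (Fin m)).powerset,
          ((fun k => (-1 : ℤ) ^ k * ((m - k : ℕ) ^ n : ℕ)) #t) := by
        apply Finset.sum_congr rfl; intro t _; rw [hinf t]
    _ = ∑ j ∈ Finset.range (m + 1), ∑ t ∈ Finset.powersetCard j (Finset.univ : Finset (Fin m)),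
          ((fun k => (-1 : ℤ) ^ k * ((m - k : ℕ) ^ n : ℕ)) #t) := by
        rw [Finset.sum_powerset]; simp
    _ = ∑ k ∈ Finset.range (m + 1), (-1 : ℤ) ^ k * (m.choose k) * ((m - k : ℕ) ^ n : ℕ) := by
        apply Finset.sum_congr rfl; intro k hk
        have hval : ∀ t ∈ Finset.powersetCard k (Finset.univ : Finset (Fin m)),
            ((fun k => (-1 : ℤ) ^ k * ((m - k : ℕ) ^ n : ℕ)) #t)
              = (-1 : ℤ) ^ k * ((m - k : ℕ) ^ n : ℕ) := by
          intro t ht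
          rw [(Finset.mem_powersetCard.1 ht).2]
        rw [Finset.sum_congr rfl hval, Finset.sum_const, Finset.card_powersetCard,
          Finset.card_univ, Fintype.card_fin, nsmul_eq_mul]
        ring

noncomputable def Gterm (m n k : ℕ) : ℝ :=
  (-1 : ℝ) ^ k * (m.choose (k + 1)) * (((m - (k + 1) : ℕ) : ℝ) / m) ^ n

lemma miss_eq_tsum (m n : ℕ) (hm : 1 ≤ m) :
    couponMissProb m n = ∑' k : ℕ, Gterm m n k := by
  classical
  have hm0 : (0 : ℝ) < m := by exact_mod_cast hm
  have hmn : (0 : ℝ) < (m : ℝ) ^ n := pow_pos hm0 n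
  have hsurj : (Nat.card {f : Fin n → Fin m // Function.Surjective f} : ℝ) =
      ∑ k ∈ Finset.range (m + 1), (-1 : ℝ) ^ k * (m.choose k) * ((m - k : ℕ) : ℝ) ^ n := by
    have := card_surj m n
    have h2 : ((Nat.card {f : Fin n → Fin m // Function.Surjective f} : ℤ) : ℝ)
        = ((∑ k ∈ Finset.range (m + 1), (-1 : ℤ) ^ k * (m.choose k) * ((m - k : ℕ) ^ n : ℕ) : ℤ) : ℝ) := by
      exact_mod_cast congrArg (fun z : ℤ => (z : ℝ)) this
    push_cast at h2
    exact_mod_cast h2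
  have hcompl : (Nat.card {f : Fin n → Fin m // ¬ Function.Surjective f} : ℝ) =
      (m : ℝ) ^ n - (Nat.card {f : Fin n → Fin m // Function.Surjective f} : ℝ) := by
    rw [Nat.card_eq_fintype_card, Nat.card_eq_fintype_card, Fintype.card_subtype_compl]
    have hle : Fintype.card {f : Fin n → Fin m // Function.Surjective f}
        ≤ Fintype.card (Fin n → Fin m) := Fintype.card_subtype_le _
    rw [Nat.cast_sub hle]
    congr 1
    rw [Fintype.card_fun]
    push_cast [Fintype.card_fin]
    ring
  have hfin : couponMissProb m n = ∑ k ∈ Finset.range m, Gterm m n k := by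
    rw [couponMissProb, hcompl, hsurj, Finset.sum_range_succ']
    simp only [pow_zero, Nat.choose_zero_right, Nat.sub_zero, Nat.cast_one, one_mul, mul_one]
    rw [show ∀ a b : ℝ, a - (b + a) = -b from fun a b => by ring, ← Finset.sum_neg_distrib, Finset.sum_div]
    apply Finset.sum_congr rfl
    intro k hk
    rw [Gterm, div_pow, pow_succ]
    field_simp
  rw [hfin]
  refine (tsum_eq_sum ?_).symm
  intro k hk
  have hk' : m < k + 1 := by
    simpa using Nat.lt_succ_of_le (le_of_not_gt (fun h => hk (Finset.mem_range.2 h)))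
  rw [Gterm, Nat.choose_eq_zero_of_lt hk']
  simp

lemma inv_nat_tendsto : Tendsto (fun m : ℕ => ((m:ℝ))⁻¹) atTop (nhds 0) :=
  tendsto_inv_atTop_zero.comp tendsto_natCast_atTop_atTop

-- log(m)/m → 0 along ℕ
lemma log_div_self_tendsto : Tendsto (fun m : ℕ => Real.log m / m) atTop (nhds 0) :=
  (Real.isLittleO_log_id_atTop.tendsto_div_nhds_zero).comp tendsto_natCast_atTop_atTop

-- the key exponent limit
set_option maxHeartbeats 1000000 in
lemma exponent_limit (c : ℝ) (hc : 0 < c) (j : ℕ) (hj : 0 < j) :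
    Tendsto (fun m : ℕ =>
      (j : ℝ) * Real.log m
        + (⌊(m : ℝ) * Real.log m + (m : ℝ) * c⌋₊ : ℝ) * Real.log (((m : ℝ) - j) / m))
      atTop (nhds (-(j : ℝ) * c)) := by
  set n : ℕ → ℝ := fun m => (⌊(m : ℝ) * Real.log m + (m : ℝ) * c⌋₊ : ℝ) with hn
  set N : ℕ → ℝ := fun m => (m : ℝ) * Real.log m + (m : ℝ) * c with hN
  set lg : ℕ → ℝ := fun m => Real.log (((m : ℝ) - j) / m) with hlg
  -- E2 bound : |n - N| ≤ 1 for m ≥ 1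
  have hlg0 : Tendsto lg atTop (nhds 0) := by
    have h1 : Tendsto (fun m : ℕ => ((m : ℝ) - j) / m) atTop (nhds 1) := by
      have h0 := Filter.Tendsto.const_mul (j:ℝ) inv_nat_tendsto
      simp only [mul_zero] at h0
      have := Filter.Tendsto.sub (tendsto_const_nhds (x := (1:ℝ)) (f := atTop (α := ℕ))) h0
      simp only [sub_zero] at this
      apply this.congr'
      filter_upwards [eventually_gt_atTop 0] with m hm
      have : (m : ℝ) ≠ 0 := Nat.cast_ne_zero.2 hm.ne'
      field_simp
    have := (Real.continuousAt_log one_ne_zero).tendsto.comp h1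
    rw [Real.log_one] at this; exact this
  have hE2 : Tendsto (fun m : ℕ => (n m - N m) * lg m) atTop (nhds 0) := by
    apply squeeze_zero_norm' (a := fun m => |lg m|)
    · filter_upwards [eventually_ge_atTop 1] with m hm
      have hN0 : 0 ≤ N m := by
        have : (0:ℝ) ≤ (m : ℝ) * Real.log m := by
          apply mul_nonneg (Nat.cast_nonneg m)
          exact Real.log_nonneg (by exact_mod_cast hm)
        have h2 : (0:ℝ) ≤ (m : ℝ) * c := mul_nonneg (Nat.cast_nonneg m) hc.le
        simp only [hN]; linarith
      have h1 : N m - 1 < n m := Nat.sub_one_lt_floor _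
      have h2 : n m ≤ N m := Nat.floor_le hN0
      have : |n m - N m| ≤ 1 := by rw [abs_le]; constructor <;> linarith
      calc ‖(n m - N m) * lg m‖ = |n m - N m| * |lg m| := abs_mul _ _
        _ ≤ 1 * |lg m| := by gcongr
        _ = |lg m| := one_mul _
    · simpa using hlg0.abs
  have hE1 : Tendsto (fun m : ℕ => (Real.log m + c) * ((j : ℝ) + (m : ℝ) * lg m)) atTop (nhds 0) := by
    apply squeeze_zero_norm' (a := fun m : ℕ => (Real.log m + c) * (2 * j ^ 2 / m))
    · filter_upwards [eventually_ge_atTop (2 * j), eventually_ge_atTop 2] with m hm hm2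
      have hmj : (j : ℝ) < m := by
        have : j < m := lt_of_lt_of_le (by omega) hm
        exact_mod_cast this
      have hm0 : (0:ℝ) < m := lt_of_le_of_lt (Nat.cast_nonneg j) hmj
      have hmjpos : (0:ℝ) < (m : ℝ) - j := by linarith
      have hx : (0:ℝ) < ((m : ℝ) - j) / m := div_pos hmjpos hm0
      have hlogc : 0 < Real.log m + c := by
        have : (1:ℝ) ≤ m := by exact_mod_cast (by omega : 1 ≤ m)
        have := Real.log_nonneg this
        linarith
      -- upper: lg m ≤ -j/m
      have hup : lg m ≤ -(j : ℝ) / m := by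
        have := Real.log_le_sub_one_of_pos hx
        have h2 : ((m : ℝ) - j) / m - 1 = -(j : ℝ) / m := by field_simp; ring
        simp only [hlg]; linarith [h2 ▸ this]
      -- lower: lg m ≥ -j/(m-j)
      have hlo : -(j : ℝ) / ((m : ℝ) - j) ≤ lg m := by
        have hinv : 0 < (m : ℝ) / ((m : ℝ) - j) := div_pos hm0 hmjpos
        have h1 := Real.log_le_sub_one_of_pos hinv
        have h2 : Real.log ((m : ℝ) / ((m : ℝ) - j)) = - lg m := by
          rw [hlg, ← Real.log_inv]
          congr 1
          field_simp
        have h3 : (m : ℝ) / ((m : ℝ) - j) - 1 = (j : ℝ) / ((m : ℝ) - j) := by field_simp; ring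
        rw [h2, h3] at h1
        rw [neg_div]
        linarith
      -- so |j + m * lg m| ≤ 2 j^2 / m
      have hkey : |(j : ℝ) + (m : ℝ) * lg m| ≤ 2 * j ^ 2 / m := by
        rw [abs_le]
        constructor
        · -- j + m * lg m ≥ j - m*j/(m-j) = -j^2/(m-j) ≥ -2j^2/m
          have h1 : (j : ℝ) + (m : ℝ) * lg m ≥ (j : ℝ) - (m : ℝ) * ((j : ℝ) / ((m : ℝ) - j)) := by
            have := mul_le_mul_of_nonneg_left hlo hm0.le
            rw [neg_div] at this
            nlinarith
          have h2 : (j : ℝ) - (m : ℝ) * ((j : ℝ) / ((m : ℝ) - j)) = -((j : ℝ)^2 / ((m : ℝ) - j)) := by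
            field_simp
            ring
          have h3 : (j : ℝ)^2 / ((m : ℝ) - j) ≤ 2 * j ^ 2 / m := by
            rw [div_le_div_iff₀ hmjpos hm0]
            have hm2j : (2 : ℝ) * j ≤ m := by exact_mod_cast hm
            nlinarith [sq_nonneg (j : ℝ), (Nat.cast_nonneg j : (0:ℝ) ≤ j)]
          linarith [h2 ▸ h1]
        · have := mul_le_mul_of_nonneg_left hup hm0.le
          have h2 : (m : ℝ) * (-(j : ℝ) / m) = -(j : ℝ) := by field_simp
          have h4 : (0:ℝ) ≤ 2 * j ^ 2 / m := by positivity
          nlinarith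
      calc ‖(Real.log m + c) * ((j : ℝ) + (m : ℝ) * lg m)‖
          = (Real.log m + c) * |(j : ℝ) + (m : ℝ) * lg m| := by
            rw [norm_mul, Real.norm_eq_abs, Real.norm_eq_abs, abs_of_pos hlogc]
        _ ≤ (Real.log m + c) * (2 * j ^ 2 / m) := by gcongr
    · have h1 : Tendsto (fun m : ℕ => Real.log m * (2 * j ^ 2 / m)) atTop (nhds 0) := by
        have := Filter.Tendsto.const_mul (2 * (j:ℝ) ^ 2) log_div_self_tendsto
        simp only [mul_zero] at this
        apply this.congr
        intro m; ring
      have h2 : Tendsto (fun m : ℕ => c * (2 * j ^ 2 / m)) atTop (nhds 0) := by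
        have := Filter.Tendsto.const_mul (c * (2 * (j:ℝ)^2)) inv_nat_tendsto
        simp only [mul_zero] at this
        apply this.congr
        intro m; ring
      have := h1.add h2
      simp only [add_zero] at this
      apply this.congr
      intro m; ring
  -- combine
  have hdecomp : ∀ m : ℕ, 1 ≤ m →
      (j : ℝ) * Real.log m + n m * lg m
        = -(j : ℝ) * c + ((Real.log m + c) * ((j : ℝ) + (m : ℝ) * lg m) + (n m - N m) * lg m) := by
    intro m hm
    simp only [hN]
    ring
  have := Filter.Tendsto.const_add (-(j : ℝ) * c) (hE1.add hE2)
  simp only [add_zero] at this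
  apply this.congr'
  filter_upwards [eventually_ge_atTop 1] with m hm
  exact (hdecomp m hm).symm

lemma pointwise_limit (δ : ℝ) (hδ0 : 0 < δ) (hδ1 : δ < 1) (k : ℕ) :
    Tendsto (fun m : ℕ => Gterm m ⌊(m : ℝ) * Real.log m + (m : ℝ) * Real.log (1 / δ)⌋₊ k)
      atTop (nhds ((-1 : ℝ) ^ k * δ ^ (k + 1) / (Nat.factorial (k + 1)))) := by
  set c : ℝ := Real.log (1 / δ) with hc_def
  have hc : 0 < c := by
    rw [hc_def, Real.log_div one_ne_zero hδ0.ne', Real.log_one]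
    have := Real.log_neg hδ0 hδ1
    linarith
  have hlogδ : Real.log δ = -c := by
    rw [hc_def, Real.log_div one_ne_zero hδ0.ne', Real.log_one]; ring
  set j : ℕ := k + 1 with hj_def
  have hj : 0 < j := Nat.succ_pos k
  set n : ℕ → ℕ := fun m => ⌊(m : ℝ) * Real.log m + (m : ℝ) * c⌋₊ with hn
  -- B limit
  have hB : Tendsto (fun m : ℕ => ((m:ℝ)) ^ j * (((m - j : ℕ) : ℝ) / m) ^ (n m))
      atTop (nhds (δ ^ j)) := by
    have hL := exponent_limit c hc j hj
    have hexp := (Real.continuous_exp.tendsto _).comp hL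
    have hlim : Real.exp (-(j : ℝ) * c) = δ ^ j := by
      rw [show -(j : ℝ) * c = (j : ℝ) * Real.log δ by rw [hlogδ]; ring]
      rw [Real.exp_nat_mul, Real.exp_log hδ0]
    rw [hlim] at hexp
    apply hexp.congr'
    filter_upwards [eventually_gt_atTop j] with m hm
    have hmj : (j : ℝ) < m := by exact_mod_cast hm
    have hm0 : (0:ℝ) < m := lt_of_le_of_lt (Nat.cast_nonneg j) hmj
    have hcast : ((m - j : ℕ) : ℝ) = (m : ℝ) - j := by
      rw [Nat.cast_sub hm.le]
    have hxpos : (0:ℝ) < ((m : ℝ) - j) / m := div_pos (by linarith) hm0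
    simp only [Function.comp]
    rw [Real.exp_add, Real.exp_nat_mul, Real.exp_nat_mul, Real.exp_log hm0,
      Real.exp_log hxpos, hcast]
  -- A limit
  have hA : Tendsto (fun m : ℕ => (m.descFactorial j : ℝ) / (m:ℝ) ^ j) atTop (nhds 1) := by
    have hprod : Tendsto (fun m : ℕ => ∏ i ∈ Finset.range j, (1 - (i : ℝ) * ((m:ℝ))⁻¹))
        atTop (nhds (∏ _i ∈ Finset.range j, (1 : ℝ))) := by
      apply tendsto_finset_prod
      intro i _
      have := Filter.Tendsto.const_mul (i : ℝ) inv_nat_tendsto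
      simp only [mul_zero] at this
      have h2 := Filter.Tendsto.sub (tendsto_const_nhds (x := (1:ℝ)) (f := atTop (α := ℕ))) this
      simpa using h2
    simp only [Finset.prod_const_one] at hprod
    apply hprod.congr'
    filter_upwards [eventually_gt_atTop j] with m hm
    have hm0 : (0:ℝ) < m := by
      have : 0 < m := by omega
      exact_mod_cast this
    rw [Nat.descFactorial_eq_prod_range]
    rw [Nat.cast_prod]
    rw [show ((m:ℝ)) ^ j = ∏ _i ∈ Finset.range j, (m:ℝ) from by rw [Finset.prod_const, Finset.card_range]]
    rw [← Finset.prod_div_distrib]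
    apply Finset.prod_congr rfl
    intro i hi
    have hij : i ≤ m := le_of_lt (lt_of_lt_of_le (Finset.mem_range.1 hi) hm.le)
    rw [Nat.cast_sub hij]
    field_simp
  -- combine
  have hAB := hA.mul hB
  rw [one_mul] at hAB
  have hfinal := Filter.Tendsto.const_mul ((-1 : ℝ) ^ k / (Nat.factorial j)) hAB
  have hlim2 : (-1 : ℝ) ^ k / (Nat.factorial j) * δ ^ j = (-1 : ℝ) ^ k * δ ^ (k + 1) / (Nat.factorial (k+1)) := by
    rw [hj_def]; ring
  rw [hlim2] at hfinal
  apply hfinal.congr'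
  filter_upwards [eventually_gt_atTop j] with m hm
  have hm0 : (0:ℝ) < m := by
    have : 0 < m := by omega
    exact_mod_cast this
  have hmj : ((m:ℝ)) ^ j ≠ 0 := (pow_pos hm0 j).ne'
  have hchoose : (m.choose j : ℝ) = (m.descFactorial j : ℝ) / (Nat.factorial j) := by
    have := Nat.descFactorial_eq_factorial_mul_choose m j
    have h2 : (m.descFactorial j : ℝ) = (Nat.factorial j) * m.choose j := by exact_mod_cast this
    rw [h2]
    field_simp
  rw [Gterm]
  rw [show k + 1 = j from rfl, hchoose]
  simp only [hn]
  field_simp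

lemma gterm_bound (c : ℝ) (hc : 0 < c) :
    ∀ᶠ m in (atTop : Filter ℕ), ∀ k : ℕ,
      ‖Gterm m ⌊(m : ℝ) * Real.log m + (m : ℝ) * c⌋₊ k‖
        ≤ Real.exp 1 ^ (k + 1) / (Nat.factorial (k + 1)) := by
  filter_upwards [eventually_ge_atTop 1] with m hm k
  set j : ℕ := k + 1 with hj_def
  set n : ℕ := ⌊(m : ℝ) * Real.log m + (m : ℝ) * c⌋₊ with hn
  have hm0 : (0:ℝ) < m := by exact_mod_cast hm
  have hbpos : (0:ℝ) ≤ Real.exp 1 ^ j / (Nat.factorial j) := by positivity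
  by_cases hjm : j ≤ m
  · have hxnn : (0:ℝ) ≤ ((m - j : ℕ) : ℝ) / m := by positivity
    have hnorm : ‖Gterm m n k‖ = (m.choose j : ℝ) * (((m - j : ℕ) : ℝ) / m) ^ n := by
      rw [Gterm, norm_mul, norm_mul, norm_pow, norm_neg, norm_one, one_pow, one_mul,
        Real.norm_natCast, Real.norm_eq_abs, abs_pow, abs_of_nonneg (show (0:ℝ) ≤ ((m - (k+1) : ℕ) : ℝ) / m by positivity)]
    rw [hnorm]
    have hcast : ((m - j : ℕ) : ℝ) = (m : ℝ) - j := Nat.cast_sub hjm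
    have hstep1 : ((m - j : ℕ) : ℝ) / m ≤ (1 - 1/(m:ℝ)) ^ j := by
      have hber := one_add_mul_le_pow (a := -(1/(m:ℝ))) (by
        have h01 : (0:ℝ) < 1/(m:ℝ) := by positivity
        have h11 : 1/(m:ℝ) ≤ 1 := by rw [div_le_one hm0]; exact_mod_cast hm
        linarith) j
      have heq : ((m - j : ℕ) : ℝ) / m = 1 + (j:ℝ) * (-(1/(m:ℝ))) := by
        rw [hcast]; field_simp; ring
      rw [heq]
      rw [sub_eq_add_neg]; exact hber
    have h1m : (0:ℝ) ≤ 1 - 1/(m:ℝ) := by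
      have h1 : 1/(m:ℝ) ≤ 1 := by
        rw [div_le_one hm0]; exact_mod_cast hm
      linarith
    have hxpow : (((m - j : ℕ) : ℝ) / m) ^ n ≤ ((1 - 1/(m:ℝ)) ^ n) ^ j := by
      calc (((m - j : ℕ) : ℝ) / m) ^ n ≤ ((1 - 1/(m:ℝ)) ^ j) ^ n :=
            pow_le_pow_left₀ hxnn hstep1 n
        _ = ((1 - 1/(m:ℝ)) ^ n) ^ j := by rw [← pow_mul, ← pow_mul, Nat.mul_comm]
    have hchoose : (m.choose j : ℝ) ≤ (m:ℝ) ^ j / (Nat.factorial j) :=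
      Nat.choose_le_pow_div j m
    have hae : (m:ℝ) * (1 - 1/(m:ℝ)) ^ n ≤ Real.exp 1 := by
      have h1 : (1 - 1/(m:ℝ)) ≤ Real.exp (-(1/(m:ℝ))) := by
        have := Real.add_one_le_exp (-(1/(m:ℝ)))
        linarith
      have h2 : (1 - 1/(m:ℝ)) ^ n ≤ Real.exp (-(1/(m:ℝ))) ^ n :=
        pow_le_pow_left₀ h1m h1 n
      have h3 : Real.exp (-(1/(m:ℝ))) ^ n = Real.exp ((n:ℝ) * (-(1/(m:ℝ)))) := by
        rw [Real.exp_nat_mul]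
      have h4 : (m : ℝ) * Real.log m + (m : ℝ) * c - 1 < (n : ℝ) :=
        Nat.sub_one_lt_floor _
      have hmc : 0 < (m:ℝ) * c := by positivity
      have hkey : -(n:ℝ) ≤ 1 - (m:ℝ) * Real.log m := by linarith
      have h5 : (n:ℝ) * (-(1/(m:ℝ))) ≤ 1/(m:ℝ) - Real.log m := by
        have hdiv : (-(n:ℝ))/m ≤ (1 - (m:ℝ) * Real.log m)/m :=
          (div_le_div_iff_of_pos_right hm0).2 (by linarith)
        have e1 : (n:ℝ) * (-(1/(m:ℝ))) = (-(n:ℝ))/m := by field_simp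
        have e2 : (1 - (m:ℝ) * Real.log m)/m = 1/(m:ℝ) - Real.log m := by
          field_simp
        rw [e1, ← e2]
        exact hdiv
      calc (m:ℝ) * (1 - 1/(m:ℝ)) ^ n ≤ (m:ℝ) * Real.exp ((n:ℝ) * (-(1/(m:ℝ)))) := by
            rw [← h3]; exact mul_le_mul_of_nonneg_left h2 hm0.le
        _ ≤ (m:ℝ) * Real.exp (1/(m:ℝ) - Real.log m) := by
            have := Real.exp_le_exp.2 h5
            exact mul_le_mul_of_nonneg_left this hm0.le
        _ = Real.exp (1/(m:ℝ)) := by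
            rw [Real.exp_sub, Real.exp_log hm0]
            field_simp
        _ ≤ Real.exp 1 := by
            apply Real.exp_le_exp.2
            rw [div_le_one hm0]
            exact_mod_cast hm
    calc (m.choose j : ℝ) * (((m - j : ℕ) : ℝ) / m) ^ n
        ≤ ((m:ℝ) ^ j / (Nat.factorial j)) * ((1 - 1/(m:ℝ)) ^ n) ^ j :=
          mul_le_mul hchoose hxpow (pow_nonneg hxnn n) (by positivity)
      _ = ((m:ℝ) * (1 - 1/(m:ℝ)) ^ n) ^ j / (Nat.factorial j) := by
          rw [mul_pow]; ring
      _ ≤ Real.exp 1 ^ j / (Nat.factorial j) := by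
          gcongr
  · rw [Gterm, Nat.choose_eq_zero_of_lt (by omega)]
    simp only [Nat.cast_zero, zero_mul, mul_zero, zero_div, zero_pow, norm_zero]
    norm_num
    positivity

/-- For fixed `δ ∈ (0,1)` and `n(m) = m·log m + m·log(1/δ)`, the probability that
`n(m)` i.i.d. uniform draws from `{1,…,m}` fail to cover `{1,…,m}` converges to
`1 - exp(-δ)` as `m → ∞`. -/
theorem coupon_miss_limit (δ : ℝ) (hδ0 : 0 < δ) (hδ1 : δ < 1) :
    Tendsto
      (fun m : ℕ => couponMissProb m ⌊(m : ℝ) * Real.log m + (m : ℝ) * Real.log (1 / δ)⌋₊)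
      atTop (nhds (1 - Real.exp (-δ))) := by
  have hc : 0 < Real.log (1 / δ) := by
    rw [Real.log_div one_ne_zero hδ0.ne', Real.log_one]
    have := Real.log_neg hδ0 hδ1
    linarith
  have hsummable : Summable (fun k : ℕ => Real.exp 1 ^ (k + 1) / (Nat.factorial (k + 1))) := by
    have h := Real.summable_pow_div_factorial (Real.exp 1)
    exact h.comp_injective Nat.succ_injective
  have hmain := tendsto_tsum_of_dominated_convergence hsummable
    (pointwise_limit δ hδ0 hδ1) (gterm_bound (Real.log (1 / δ)) hc)
  -- identify the limit
  have hs : Summable (fun k : ℕ => (-δ) ^ k / (Nat.factorial k)) :=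
    Real.summable_pow_div_factorial (-δ)
  have hexp : Real.exp (-δ) = ∑' k : ℕ, (-δ) ^ k / (Nat.factorial k) := by
    rw [Real.exp_eq_exp_ℝ, NormedSpace.exp_eq_tsum_div]
  have hzero : ∑' k : ℕ, (-δ) ^ k / (Nat.factorial k)
      = 1 + ∑' k : ℕ, (-δ) ^ (k + 1) / (Nat.factorial (k + 1)) := by
    rw [Summable.tsum_eq_zero_add hs]
    norm_num
  have hg : ∀ k : ℕ, (-1 : ℝ) ^ k * δ ^ (k + 1) / (Nat.factorial (k + 1))
      = -((-δ) ^ (k + 1) / (Nat.factorial (k + 1))) := by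
    intro k
    have h1 : (-δ : ℝ) ^ (k + 1) = (-1 : ℝ) ^ (k + 1) * δ ^ (k + 1) := by
      rw [neg_pow]
    rw [h1, pow_succ]
    ring
  have hval : ∑' k : ℕ, (-1 : ℝ) ^ k * δ ^ (k + 1) / (Nat.factorial (k + 1))
      = 1 - Real.exp (-δ) := by
    rw [tsum_congr hg, tsum_neg]
    have : ∑' k : ℕ, (-δ) ^ (k + 1) / (Nat.factorial (k + 1)) = Real.exp (-δ) - 1 := by
      rw [hexp, hzero]; ring
    rw [this]; ring
  rw [← hval]
  apply hmain.congr'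
  filter_upwards [eventually_ge_atTop 1] with m hm
  exact (miss_eq_tsum m _ hm).symm
end

section
/- Sample complexity lower bound for homology inference (combinatorial core): fix δ ∈ (0,1) and let m → ∞. If the sample size satisfies n ≤ m·log m + m·log(1/δ), then any test between H_0 (uniform on m equal-mass components) and the uniform mixture of the m 'one-component-removed' alternatives has total risk at least (1 - e^{-1})·δ in the limit; hence the minimax estimation risk for the number of connected components is at least ((1 - e^{-1})/2)·δ. -/
open MeasureTheory ENNReal Real Filter Finset

namespace HomologyLB
lemma meas_all {α : Type*} [Countable α] [MeasurableSpace α] [MeasurableSingletonClass α]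
    (A : Set α) : MeasurableSet A := A.to_countable.measurableSet

lemma measure_eq_sum {α : Type*} [Fintype α] [MeasurableSpace α] [MeasurableSingletonClass α]
    (μ : Measure α) (S : Set α) :
    μ S = ∑ x ∈ (Set.toFinite S).toFinset, μ {x} := by
  classical
  have hS : S = ⋃ x ∈ (Set.toFinite S).toFinset, {x} := by
    ext y
    simp only [Set.mem_iUnion, Set.Finite.mem_toFinset, Set.mem_singleton_iff]
    exact ⟨fun h => ⟨y, h, rfl⟩, fun ⟨x, hx, he⟩ => he ▸ hx⟩
  conv_lhs => rw [hS]
  rw [measure_biUnion_finset ?_ (fun _ _ => measurableSet_singleton _)]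
  intro a _ b _ hab
  simp [Function.onFun, Set.disjoint_singleton, hab]

noncomputable def mu0 (m : ℕ) : Measure (Fin m) := (m : ℝ≥0∞)⁻¹ • Measure.count

noncomputable def mu1 (m : ℕ) (i : Fin m) : Measure (Fin m) :=
  ((m - 1 : ℕ) : ℝ≥0∞)⁻¹ • Measure.count.restrict {i}ᶜ

lemma mu0_singleton {m : ℕ} (a : Fin m) : mu0 m {a} = (m : ℝ≥0∞)⁻¹ := by
  simp [mu0, Measure.count_singleton]

lemma mu1_singleton {m : ℕ} (i a : Fin m) :
    mu1 m i {a} = if a = i then 0 else ((m - 1 : ℕ) : ℝ≥0∞)⁻¹ := by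
  rw [mu1, Measure.smul_apply, Measure.restrict_apply (measurableSet_singleton a)]
  split_ifs with h
  · simp [h]
  · rw [Set.inter_eq_left.mpr
      (by simpa [Set.subset_compl_singleton_iff] using Ne.symm h)]
    simp [Measure.count_singleton]

instance (m : ℕ) : IsFiniteMeasure (mu0 m) := by
  constructor
  rcases Nat.eq_zero_or_pos m with hm | hm
  · subst hm
    rw [measure_eq_sum]
    simp
  · rw [measure_eq_sum]
    simp only [mu0_singleton]
    refine ENNReal.sum_lt_top.2 (fun a _ => ?_)
    simp [ENNReal.inv_lt_top, (by omega : m ≠ 0), hm]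

instance (m : ℕ) (i : Fin m) : IsFiniteMeasure (mu1 m i) := by
  constructor
  rw [measure_eq_sum]
  simp only [mu1_singleton]
  refine ENNReal.sum_lt_top.2 (fun a _ => ?_)
  split_ifs with h
  · simp
  · have : 1 ≤ m - 1 := by
      have : 2 ≤ m := by
        rcases Nat.lt_or_ge m 2 with h2 | h2
        · interval_cases m
          · exact absurd i.2 (by simp)
          · exact absurd (Subsingleton.elim a i) h
        · exact h2
      omega
    simp [ENNReal.inv_lt_top]
    omega

lemma mu0_prob {m : ℕ} (hm : 1 ≤ m) : IsProbabilityMeasure (mu0 m) := by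
  constructor
  rw [measure_eq_sum]
  simp only [mu0_singleton, Finset.sum_const, Set.Finite.toFinset_univ, Finset.card_univ,
    Fintype.card_fin, nsmul_eq_mul]
  exact ENNReal.mul_inv_cancel (by exact_mod_cast (by omega : m ≠ 0)) (by simp)

lemma mu1_prob {m : ℕ} (hm : 2 ≤ m) (i : Fin m) : IsProbabilityMeasure (mu1 m i) := by
  classical
  constructor
  rw [measure_eq_sum]
  simp only [mu1_singleton]
  rw [Finset.sum_ite, Finset.sum_const, Finset.sum_const]
  have h1 : (Finset.filter (fun a => ¬a = i) (Set.toFinite (Set.univ : Set (Fin m))).toFinset).card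
      = m - 1 := by
    simp only [Set.Finite.toFinset_univ]
    have : Finset.filter (fun a => ¬a = i) Finset.univ = Finset.univ.erase i := by
      ext a; simp [Finset.mem_erase, and_comm]
    rw [this, Finset.card_erase_of_mem (Finset.mem_univ i), Finset.card_univ, Fintype.card_fin]
  rw [h1]
  simp only [smul_zero, zero_add, nsmul_eq_mul]
  exact ENNReal.mul_inv_cancel (by exact_mod_cast (by omega : m - 1 ≠ 0)) (by simp)

noncomputable def P0 (m N : ℕ) : Measure (Fin N → Fin m) := Measure.pi fun _ => mu0 m
noncomputable def P1 (m N : ℕ) (i : Fin m) : Measure (Fin N → Fin m) := Measure.pi fun _ => mu1 m i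

lemma P0_singleton {m N : ℕ} (x : Fin N → Fin m) : P0 m N {x} = ((m : ℝ≥0∞)⁻¹) ^ N := by
  rw [P0, show ({x} : Set (Fin N → Fin m)) = Set.pi Set.univ (fun k => {x k}) by
    simp [Set.univ_pi_singleton], Measure.pi_pi]
  simp [mu0_singleton]

lemma P1_singleton {m N : ℕ} (i : Fin m) (x : Fin N → Fin m) :
    P1 m N i {x} = if ∀ k, x k ≠ i then (((m - 1 : ℕ) : ℝ≥0∞)⁻¹) ^ N else 0 := by
  rw [P1, show ({x} : Set (Fin N → Fin m)) = Set.pi Set.univ (fun k => {x k}) by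
    simp [Set.univ_pi_singleton], Measure.pi_pi]
  split_ifs with h
  · rw [Finset.prod_congr rfl (fun k _ => by rw [mu1_singleton, if_neg (h k)])]
    simp
  · push_neg at h
    obtain ⟨k, hk⟩ := h
    exact Finset.prod_eq_zero (Finset.mem_univ k) (by rw [mu1_singleton, if_pos hk])

noncomputable def missF {m N : ℕ} (x : Fin N → Fin m) : Finset (Fin m) :=
  Finset.univ.filter (fun i => ∀ k, x k ≠ i)

def Mset (m N : ℕ) : Set (Fin N → Fin m) := {x | ∃ i, ∀ k, x k ≠ i}

lemma mem_Mset_iff {m N : ℕ} (x : Fin N → Fin m) : x ∈ Mset m N ↔ 1 ≤ (missF x).card := by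
  rw [Mset, Set.mem_setOf_eq, Nat.one_le_iff_ne_zero, Ne, Finset.card_eq_zero, missF,
    ← Finset.not_nonempty_iff_eq_empty, not_not, Finset.filter_nonempty_iff]
  simp

lemma sum_P1 {m N : ℕ} (S : Set (Fin N → Fin m)) :
    ∑ i, P1 m N i S
      = ∑ x ∈ (Set.toFinite S).toFinset, ((missF x).card : ℝ≥0∞) * (((m - 1 : ℕ) : ℝ≥0∞)⁻¹) ^ N := by
  classical
  simp_rw [measure_eq_sum (P1 m N _) S]
  rw [Finset.sum_comm]
  refine Finset.sum_congr rfl (fun x _ => ?_)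
  simp_rw [P1_singleton]
  rw [Finset.sum_ite, Finset.sum_const_zero, add_zero, Finset.sum_const, missF, nsmul_eq_mul]

lemma stepB {m N : ℕ} (hm : 2 ≤ m) (hc : m * (m - 1) ^ N ≤ m ^ N) (A : Set (Fin N → Fin m)) :
    P0 m N (Mset m N) ≤ P0 m N A + (m : ℝ≥0∞)⁻¹ * ∑ i, P1 m N i Aᶜ := by
  classical
  have key : P0 m N (Aᶜ ∩ Mset m N) ≤ (m : ℝ≥0∞)⁻¹ * ∑ i, P1 m N i Aᶜ := by
    rw [sum_P1, Finset.mul_sum, measure_eq_sum]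
    simp_rw [P0_singleton]
    have hsub : (Set.toFinite (Aᶜ ∩ Mset m N)).toFinset ⊆ (Set.toFinite Aᶜ).toFinset := by
      intro x hx
      simp only [Set.Finite.mem_toFinset] at hx ⊢
      exact hx.1
    refine le_trans (Finset.sum_le_sum (fun x hx => ?_))
      (Finset.sum_le_sum_of_subset hsub)
    -- (m⁻¹)^N ≤ m⁻¹ * K x * w^N  given K x ≥ 1
    have hK : 1 ≤ (missF x).card := by
      rw [Set.Finite.mem_toFinset] at hx
      exact (mem_Mset_iff x).mp hx.2
    calc ((m : ℝ≥0∞)⁻¹) ^ N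
        ≤ (m : ℝ≥0∞)⁻¹ * (((m - 1 : ℕ) : ℝ≥0∞)⁻¹) ^ N := by
          rw [← ENNReal.inv_pow, ← ENNReal.inv_pow, ← ENNReal.mul_inv (Or.inl (by exact_mod_cast (by omega : (m:ℕ) ≠ 0))) (Or.inl (by simp))]
          rw [ENNReal.inv_le_inv]
          exact_mod_cast Nat.cast_le.mpr hc
      _ ≤ (m : ℝ≥0∞)⁻¹ * (((missF x).card : ℝ≥0∞) * (((m - 1 : ℕ) : ℝ≥0∞)⁻¹) ^ N) := by
          exact mul_le_mul_right (le_mul_of_one_le_left zero_le (by exact_mod_cast hK)) _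
  calc P0 m N (Mset m N) ≤ P0 m N (A ∩ Mset m N) + P0 m N (Aᶜ ∩ Mset m N) := by
        conv_lhs => rw [show Mset m N = (A ∩ Mset m N) ∪ (Aᶜ ∩ Mset m N) by
          rw [← Set.union_inter_distrib_right, Set.union_compl_self, Set.univ_inter]]
        exact measure_union_le _ _
    _ ≤ P0 m N A + (m : ℝ≥0∞)⁻¹ * ∑ i, P1 m N i Aᶜ :=
        add_le_add (measure_mono Set.inter_subset_left) key

lemma map_cast {m n N : ℕ} (h : n ≤ N) (ν : Measure (Fin m)) [IsProbabilityMeasure ν] :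
    (Measure.pi fun _ : Fin N => ν).map (fun x => x ∘ Fin.castLE h)
      = Measure.pi (fun _ : Fin n => ν) := by
  classical
  refine ((Measure.pi_eq (fun s hs => ?_))).symm
  have hmeas : Measurable (fun x : Fin N → Fin m => x ∘ Fin.castLE h) :=
    measurable_pi_lambda _ (fun i => measurable_pi_apply _)
  rw [Measure.map_apply hmeas (MeasurableSet.univ_pi (fun i => hs i))]
  have hpre : (fun x : Fin N → Fin m => x ∘ Fin.castLE h) ⁻¹' (Set.univ.pi s)
      = Set.univ.pi (fun j : Fin N => if hj : (j : ℕ) < n then s ⟨j, hj⟩ else Set.univ) := by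
    ext x
    simp only [Set.mem_preimage, Set.mem_pi, Set.mem_univ, forall_true_left, Function.comp]
    constructor
    · intro hx j
      by_cases hj : (j : ℕ) < n
      · rw [dif_pos hj]
        have := hx ⟨j, hj⟩
        simpa using this
      · rw [dif_neg hj]; trivial
    · intro hx i
      have := hx (Fin.castLE h i)
      rw [dif_pos (by simpa using i.2)] at this
      simpa using this
  rw [hpre, Measure.pi_pi]
  have hg : ∀ j : Fin N,
      ν (if hj : (j : ℕ) < n then s ⟨j, hj⟩ else Set.univ)
        = (fun t : ℕ => if ht : t < n then ν (s ⟨t, ht⟩) else 1) (j : ℕ) := by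
    intro j
    by_cases hj : (j : ℕ) < n
    · simp [hj]
    · simp [hj]
  rw [Finset.prod_congr rfl (fun j _ => hg j),
    Fin.prod_univ_eq_prod_range (fun t => if ht : t < n then ν (s ⟨t, ht⟩) else 1) N,
    ← Finset.prod_subset (Finset.range_subset_range.mpr h)
      (fun t _ ht => by rw [dif_neg (by simpa using ht)]),
    ← Fin.prod_univ_eq_prod_range (fun t => if ht : t < n then ν (s ⟨t, ht⟩) else 1) n]
  exact Finset.prod_congr rfl (fun i _ => by rw [dif_pos i.2])

-- 1. counting functions avoiding S
lemma card_avoid {m N : ℕ} (S : Finset (Fin m)) :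
    (Finset.univ.filter (fun x : Fin N → Fin m => ∀ k, x k ∉ S)).card
      = (m - S.card) ^ N := by
  classical
  rw [← Fintype.card_subtype]
  rw [Fintype.card_congr (Equiv.subtypePiEquivPi (p := fun (_ : Fin N) b => b ∉ S))]
  rw [Fintype.card_fun, Fintype.card_fin, Fintype.card_subtype]
  congr 1
  rw [show Finset.univ.filter (fun b : Fin m => b ∉ S) = Sᶜ by ext a; simp]
  rw [Finset.card_compl, Fintype.card_fin]

-- 2. double counting
lemma sum_choose_miss {m N : ℕ} (j : ℕ) :
    ∑ x : Fin N → Fin m, ((missF x).card.choose j) = m.choose j * (m - j) ^ N := by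
  classical
  have h1 : ∀ x : Fin N → Fin m, (missF x).card.choose j
      = ((Finset.powersetCard j (Finset.univ : Finset (Fin m))).filter
          (fun S => S ⊆ missF x)).card := by
    intro x
    rw [← Finset.card_powersetCard]
    congr 1
    ext S
    simp only [Finset.mem_powersetCard, Finset.mem_filter, Finset.subset_univ, true_and]
    tauto
  simp_rw [h1, Finset.card_filter]
  rw [Finset.sum_comm]
  have h2 : ∀ S ∈ Finset.powersetCard j (Finset.univ : Finset (Fin m)),
      (∑ x : Fin N → Fin m, if S ⊆ missF x then 1 else 0) = (m - j) ^ N := by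
    intro S hS
    rw [Finset.mem_powersetCard] at hS
    rw [← Finset.card_filter, ← hS.2, ← card_avoid S]
    congr 1
    ext x
    simp only [Finset.mem_filter, Finset.mem_univ, true_and]
    constructor
    · intro h k hk
      have h2 := h hk
      simp only [missF, Finset.mem_filter, Finset.mem_univ, true_and] at h2
      exact h2 k rfl
    · intro h i hi
      simp only [missF, Finset.mem_filter, Finset.mem_univ, true_and]
      intro k hk
      exact h k (hk ▸ hi)
  rw [Finset.sum_congr rfl h2, Finset.sum_const, Finset.card_powersetCard,
    Finset.card_univ, Fintype.card_fin, smul_eq_mul]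

-- 3. alternating partial sum identity
lemma alt_sum_choose (K' : ℕ) : ∀ L : ℕ,
    ∑ j ∈ Finset.range (L + 1), (-1 : ℝ) ^ j * ((K' + 1).choose j)
      = (-1) ^ L * (K'.choose L) := by
  intro L
  induction L with
  | zero => simp
  | succ L ih =>
      rw [Finset.sum_range_succ, ih, Nat.choose_succ_succ]
      push_cast
      rcases Nat.even_or_odd L with h | h
      · rw [h.neg_one_pow]
        rw [(by simpa using h.add_one : Odd (L+1)).neg_one_pow]
        ring
      · rw [h.neg_one_pow, (by simpa using h.add_one : Even (L+1)).neg_one_pow]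
        ring

-- 4. pointwise Bonferroni (even depth L)
lemma bonferroni_pointwise (K L : ℕ) (hL : Even L) :
    ∑ t ∈ Finset.range L, (-1 : ℝ) ^ t * (K.choose (t + 1))
      ≤ if 1 ≤ K then 1 else 0 := by
  cases K with
  | zero => simp
  | succ K' =>
      have h := alt_sum_choose K' L
      rw [Finset.sum_range_succ'] at h
      simp only [pow_zero, one_mul, Nat.choose_zero_right, Nat.cast_one] at h
      have : ∑ t ∈ Finset.range L, (-1 : ℝ) ^ t * ((K' + 1).choose (t + 1))
          = 1 - (-1) ^ L * (K'.choose L) := by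
        have h2 : ∀ t, (-1 : ℝ) ^ (t + 1) * ((K' + 1).choose (t + 1))
            = -((-1) ^ t * ((K' + 1).choose (t + 1))) := by intro t; ring
        simp_rw [h2] at h
        rw [Finset.sum_neg_distrib] at h
        linarith
      rw [if_pos (Nat.succ_le_succ (Nat.zero_le _)), this, hL.neg_one_pow]
      have : (0:ℝ) ≤ (K'.choose L : ℝ) := Nat.cast_nonneg _
      linarith


lemma cardM_ge {m N : ℕ} (L : ℕ) (hL : Even L) :
    ∑ t ∈ Finset.range L, (-1 : ℝ) ^ t * ((m.choose (t + 1) * (m - (t + 1)) ^ N : ℕ) : ℝ)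
      ≤ ((Set.toFinite (Mset m N)).toFinset.card : ℝ) := by
  classical
  have hM : (Set.toFinite (Mset m N)).toFinset
      = Finset.univ.filter (fun x : Fin N → Fin m => 1 ≤ (missF x).card) := by
    ext x
    simp only [Set.Finite.mem_toFinset, Finset.mem_filter, Finset.mem_univ, true_and]
    exact mem_Mset_iff x
  have hcard : ((Set.toFinite (Mset m N)).toFinset.card : ℝ)
      = ∑ x : Fin N → Fin m, if 1 ≤ (missF x).card then (1 : ℝ) else 0 := by
    rw [hM, Finset.card_filter]
    push_cast
    rfl
  rw [hcard]
  have hterm : ∀ t, ((m.choose (t + 1) * (m - (t + 1)) ^ N : ℕ) : ℝ)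
      = ∑ x : Fin N → Fin m, (((missF x).card.choose (t + 1) : ℕ) : ℝ) := by
    intro t
    rw [← sum_choose_miss (N := N) (t + 1)]
    push_cast
    rfl
  calc ∑ t ∈ Finset.range L, (-1 : ℝ) ^ t * ((m.choose (t + 1) * (m - (t + 1)) ^ N : ℕ) : ℝ)
      = ∑ x : Fin N → Fin m, ∑ t ∈ Finset.range L,
          (-1 : ℝ) ^ t * ((missF x).card.choose (t + 1)) := by
        rw [Finset.sum_comm]
        exact Finset.sum_congr rfl (fun t _ => by rw [hterm, Finset.mul_sum])
    _ ≤ ∑ x : Fin N → Fin m, if 1 ≤ (missF x).card then (1 : ℝ) else 0 :=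
        Finset.sum_le_sum (fun x _ => bonferroni_pointwise _ L hL)

lemma P0_M_ge {m N L : ℕ} (hm : 1 ≤ m) (hL : Even L) (hLm : L ≤ m) :
    ENNReal.ofReal (∑ t ∈ Finset.range L,
        (-1 : ℝ) ^ t * (m.choose (t + 1)) * (((m : ℝ) - (t + 1)) / m) ^ N)
      ≤ P0 m N (Mset m N) := by
  have hm0 : (0 : ℝ) < m := by exact_mod_cast hm
  have hP : P0 m N (Mset m N)
      = ENNReal.ofReal (((Set.toFinite (Mset m N)).toFinset.card : ℝ) * ((1 : ℝ) / m) ^ N) := by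
    rw [measure_eq_sum]
    simp_rw [P0_singleton]
    rw [Finset.sum_const, nsmul_eq_mul]
    rw [ENNReal.ofReal_mul (by positivity), ENNReal.ofReal_natCast,
      ENNReal.ofReal_pow (by positivity)]
    congr 2
    rw [one_div, ENNReal.ofReal_inv_of_pos hm0, ENNReal.ofReal_natCast]
  rw [hP]
  apply ENNReal.ofReal_le_ofReal
  have h1 : ∑ t ∈ Finset.range L, (-1 : ℝ) ^ t * (m.choose (t + 1)) * (((m : ℝ) - (t + 1)) / m) ^ N
      = (∑ t ∈ Finset.range L, (-1 : ℝ) ^ t * ((m.choose (t + 1) * (m - (t + 1)) ^ N : ℕ) : ℝ))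
          * ((1 : ℝ) / m) ^ N := by
    rw [Finset.sum_mul]
    refine Finset.sum_congr rfl (fun t ht => ?_)
    have htm : t + 1 ≤ m := le_trans (Finset.mem_range.mp ht) hLm
    have hsub : ((m - (t + 1) : ℕ) : ℝ) = (m : ℝ) - (t + 1) := by
      push_cast [htm]
      ring
    push_cast [hsub]
    rw [div_pow, one_div, inv_pow]
    field_simp
  rw [h1]
  exact mul_le_mul_of_nonneg_right (cardM_ge L hL) (by positivity)

noncomputable def Nm (δ : ℝ) (m : ℕ) : ℕ := ⌈(m : ℝ) * Real.log (m / δ)⌉₊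

lemma tendsto_log_div_nat : Tendsto (fun m : ℕ => Real.log m / m) atTop (nhds 0) := by
  have h : Tendsto (fun x : ℝ => Real.log x / x ^ (1:ℝ)) atTop (nhds 0) :=
    (isLittleO_log_rpow_atTop one_pos).tendsto_div_nhds_zero
  have h2 : Tendsto (fun x : ℝ => Real.log x / x) atTop (nhds 0) := by
    refine h.congr' ?_
    filter_upwards [eventually_ge_atTop (0:ℝ)] with x hx
    rw [Real.rpow_one]
  exact h2.comp tendsto_natCast_atTop_atTop

-- (a) descFactorial ratio
lemma tendsto_choose_ratio (j : ℕ) :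
    Tendsto (fun m : ℕ => (m.choose j : ℝ) * (j.factorial) / (m : ℝ) ^ j) atTop (nhds 1) := by
  have hfac : ∀ i ∈ Finset.range j, Tendsto (fun m : ℕ => ((m : ℝ) - i) / m) atTop (nhds 1) := by
    intro i _
    have h1 : Tendsto (fun m : ℕ => 1 - (i : ℝ) / m) atTop (nhds (1 - 0)) :=
      tendsto_const_nhds.sub (tendsto_const_div_atTop_nhds_zero_nat (i : ℝ))
    rw [sub_zero] at h1
    refine h1.congr' ?_
    filter_upwards [eventually_ge_atTop 1] with m hm
    have : (m : ℝ) ≠ 0 := by positivity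
    field_simp
  have hprod : Tendsto (fun m : ℕ => ∏ i ∈ Finset.range j, ((m : ℝ) - i) / m) atTop
      (nhds (∏ _i ∈ Finset.range j, 1)) := tendsto_finset_prod _ hfac
  rw [Finset.prod_const_one] at hprod
  refine hprod.congr' ?_
  filter_upwards [eventually_ge_atTop j] with m hm
  have hm0 : (0:ℝ) < m ∨ j = 0 := by
    rcases Nat.eq_zero_or_pos j with h | h
    · exact Or.inr h
    · exact Or.inl (by exact_mod_cast lt_of_lt_of_le h hm)
  have hdesc : (m.choose j : ℝ) * (j.factorial) = ∏ i ∈ Finset.range j, ((m : ℝ) - i) := by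
    have h1 : m.choose j * j.factorial = m.descFactorial j := by
      rw [Nat.descFactorial_eq_factorial_mul_choose]; ring
    have h2 : (m.descFactorial j : ℝ) = ∏ i ∈ Finset.range j, ((m : ℝ) - i) := by
      rw [Nat.descFactorial_eq_prod_range]
      push_cast
      refine Finset.prod_congr rfl (fun i hi => ?_)
      have : i ≤ m := le_trans (Nat.le_of_lt_succ (Nat.lt_succ_of_lt (Finset.mem_range.mp hi))) hm
      push_cast [this]
      ring
    rw [← h2, ← h1]
    push_cast
    ring
  rw [hdesc, Finset.prod_div_distrib, Finset.prod_const, Finset.card_range]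



-- (b) exponent tendsto
lemma tendsto_exponent (δ : ℝ) (hδ0 : 0 < δ) (hδ1 : δ < 1) (j : ℕ) :
    Tendsto (fun m : ℕ => (j : ℝ) * Real.log m + (Nm δ m : ℝ) * Real.log (1 - (j : ℝ) / m))
      atTop (nhds ((j : ℝ) * Real.log δ)) := by
  have hδ0' : Real.log δ < 0 := Real.log_neg hδ0 hδ1
  set g : ℕ → ℝ := fun m => (j : ℝ) * (1 / m) +
    ((j : ℝ) ^ 2 * ((Real.log m - Real.log δ) / m) + (j : ℝ) ^ 2 * ((1 / m) * (1 / m)))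
      * (1 - (j : ℝ) / m)⁻¹ with hg
  have hgt : Tendsto g atTop (nhds 0) := by
    have t1 : Tendsto (fun m : ℕ => (1 : ℝ) / m) atTop (nhds 0) :=
      tendsto_const_div_atTop_nhds_zero_nat 1
    have t2 : Tendsto (fun m : ℕ => (Real.log m - Real.log δ) / m) atTop (nhds 0) := by
      have := tendsto_log_div_nat.sub (tendsto_const_div_atTop_nhds_zero_nat (Real.log δ))
      rw [sub_zero] at this
      refine this.congr (fun m => ?_)
      rw [sub_div]
    have t3 : Tendsto (fun m : ℕ => (1 - (j : ℝ) / m)⁻¹) atTop (nhds 1) := by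
      have h4 : Tendsto (fun m : ℕ => 1 - (j : ℝ) / m) atTop (nhds (1 - 0)) :=
        tendsto_const_nhds.sub (tendsto_const_div_atTop_nhds_zero_nat (j : ℝ))
      rw [sub_zero] at h4
      simpa using h4.inv₀ one_ne_zero
    have h5 := ((tendsto_const_nhds (x := (j:ℝ))).mul t1).add
      ((((tendsto_const_nhds (x := (j:ℝ)^2)).mul t2).add
        ((tendsto_const_nhds (x := (j:ℝ)^2)).mul (t1.mul t1))).mul t3)
    have h0 : (j:ℝ) * 0 + ((j:ℝ)^2 * 0 + (j:ℝ)^2 * (0*0)) * 1 = 0 := by norm_num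
    rw [h0] at h5
    exact h5
  have hsq : Tendsto (fun m : ℕ => ((j : ℝ) * Real.log m
      + (Nm δ m : ℝ) * Real.log (1 - (j : ℝ) / m)) - (j : ℝ) * Real.log δ) atTop (nhds 0) := by
    refine squeeze_zero_norm' ?_ hgt
    filter_upwards [eventually_ge_atTop (2 * j + 1)] with m hm
    have hjm : j < m := by omega
    have hm1 : 1 ≤ m := by omega
    have hmR : (0 : ℝ) < m := by exact_mod_cast Nat.lt_of_lt_of_le Nat.zero_lt_one hm1
    set x : ℝ := (j : ℝ) / m with hxdef
    have hx0 : 0 ≤ x := by positivity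
    have hx1 : x < 1 := by
      rw [hxdef, div_lt_one hmR]; exact_mod_cast hjm
    have hR : |x + Real.log (1 - x)| ≤ x ^ 2 / (1 - x) := by
      have h := Real.abs_log_sub_add_sum_range_le (by rwa [abs_of_nonneg hx0]) 1
      simpa [abs_of_nonneg hx0] using h
    set ν : ℝ := (Nm δ m : ℝ) with hν
    set Lg : ℝ := Real.log m - Real.log δ with hLg
    have hlogm : 0 ≤ Real.log m := Real.log_nonneg (by exact_mod_cast hm1)
    have hLg0 : 0 ≤ Lg := by rw [hLg]; linarith
    have hlogdiv : Real.log ((m : ℝ) / δ) = Lg := Real.log_div (ne_of_gt hmR) (ne_of_gt hδ0)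
    have hN1 : (m : ℝ) * Lg ≤ ν := by
      rw [hν, Nm, hlogdiv]; exact Nat.le_ceil _
    have hN2 : ν ≤ (m : ℝ) * Lg + 1 := by
      rw [hν, Nm, hlogdiv]
      exact (Nat.ceil_lt_add_one (by positivity)).le
    have hν0 : 0 ≤ ν := by rw [hν]; positivity
    set R : ℝ := x + Real.log (1 - x) with hRdef
    have hDeq : (j : ℝ) * Real.log m + ν * Real.log (1 - x) - (j : ℝ) * Real.log δ
        = ((j : ℝ) * Lg - ν * x) + ν * R := by
      rw [hRdef, hLg]; ring
    clear_value x ν Lg R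
    rw [Real.norm_eq_abs, hDeq]
    have ha1 : |(j : ℝ) * Lg - ν * x| ≤ (j : ℝ) * (1 / m) := by
      rw [abs_le]
      constructor
      · have h1 : ν * x ≤ ((m : ℝ) * Lg + 1) * x := mul_le_mul_of_nonneg_right hN2 hx0
        have h2 : ((m : ℝ) * Lg + 1) * x = (j : ℝ) * Lg + (j : ℝ) * (1 / m) := by
          rw [hxdef]; field_simp
        linarith
      · have h1 : ((m : ℝ) * Lg) * x ≤ ν * x := mul_le_mul_of_nonneg_right hN1 hx0
        have h2 : ((m : ℝ) * Lg) * x = (j : ℝ) * Lg := by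
          rw [hxdef]; field_simp
        have h3 : 0 ≤ (j : ℝ) * (1 / m) := by positivity
        linarith
    have ha2 : |ν * R| ≤ ((m : ℝ) * Lg + 1) * (x ^ 2 / (1 - x)) := by
      rw [abs_mul, abs_of_nonneg hν0]
      exact mul_le_mul hN2 hR (abs_nonneg _) (by linarith)
    have ha3 : ((m : ℝ) * Lg + 1) * (x ^ 2 / (1 - x))
        = ((j : ℝ) ^ 2 * (Lg / m) + (j : ℝ) ^ 2 * ((1 / m) * (1 / m))) * (1 - x)⁻¹ := by
      have hmne : (m : ℝ) ≠ 0 := ne_of_gt hmR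
      have hfactor : ((m : ℝ) * Lg + 1) * x ^ 2
          = (j : ℝ) ^ 2 * (Lg / m) + (j : ℝ) ^ 2 * ((1 / m) * (1 / m)) := by
        rw [hxdef, div_pow]
        field_simp
      rw [div_eq_mul_inv, ← mul_assoc, hfactor]
    calc |((j : ℝ) * Lg - ν * x) + ν * R| ≤ |(j : ℝ) * Lg - ν * x| + |ν * R| := abs_add_le _ _
      _ ≤ (j : ℝ) * (1 / m) + ((m : ℝ) * Lg + 1) * (x ^ 2 / (1 - x)) := add_le_add ha1 ha2
      _ = g m := by rw [ha3, hg, hLg, hxdef]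
  have := hsq.add (tendsto_const_nhds (x := (j : ℝ) * Real.log δ))
  rw [zero_add] at this
  refine this.congr (fun m => by ring)

-- full term limit
lemma tendsto_term (δ : ℝ) (hδ0 : 0 < δ) (hδ1 : δ < 1) (j : ℕ) :
    Tendsto (fun m : ℕ => (m.choose j : ℝ) * (((m : ℝ) - j) / m) ^ (Nm δ m)) atTop
      (nhds (δ ^ j / j.factorial)) := by
  have hF := tendsto_choose_ratio j
  have hE := tendsto_exponent δ hδ0 hδ1 j
  have hG : Tendsto (fun m : ℕ =>
      Real.exp ((j : ℝ) * Real.log m + (Nm δ m : ℝ) * Real.log (1 - (j : ℝ) / m))) atTop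
      (nhds (δ ^ j)) := by
    have h2 : Tendsto (fun m : ℕ => Real.exp ((j : ℝ) * Real.log m
        + (Nm δ m : ℝ) * Real.log (1 - (j : ℝ) / m))) atTop
        (nhds (Real.exp ((j : ℝ) * Real.log δ))) := (Real.continuous_exp.tendsto _).comp hE
    rw [show Real.exp ((j : ℝ) * Real.log δ) = δ ^ j by
      rw [← Real.log_pow, Real.exp_log (pow_pos hδ0 j)]] at h2
    exact h2
  have hcomb := (hF.mul (tendsto_const_nhds (x := 1 / (j.factorial : ℝ)))).mul hG
  have hval : (1 : ℝ) * (1 / (j.factorial : ℝ)) * δ ^ j = δ ^ j / j.factorial := by ring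
  rw [hval] at hcomb
  refine hcomb.congr' ?_
  filter_upwards [eventually_ge_atTop (j + 1)] with m hm
  have hjm : j < m := by omega
  have hmR : (0 : ℝ) < m := by
    have : 0 < m := by omega
    exact_mod_cast this
  have hxm : (0 : ℝ) < 1 - (j : ℝ) / m := by
    rw [sub_pos, div_lt_one hmR]; exact_mod_cast hjm
  have hexp : Real.exp ((j : ℝ) * Real.log m + (Nm δ m : ℝ) * Real.log (1 - (j : ℝ) / m))
      = (m : ℝ) ^ j * (1 - (j : ℝ) / m) ^ (Nm δ m) := by
    rw [Real.exp_add, ← Real.log_pow, ← Real.log_pow,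
      Real.exp_log (pow_pos hmR j), Real.exp_log (pow_pos hxm _)]
  rw [hexp]
  have h1m : (1 : ℝ) - (j : ℝ) / m = ((m : ℝ) - j) / m := by field_simp
  rw [h1m]
  have hfac : (j.factorial : ℝ) ≠ 0 := by positivity
  have hmj : (m : ℝ) ^ j ≠ 0 := by positivity
  field_simp

-- partial sum of the alternating series vs exp(-δ)
lemma Lsum_ge (L : ℕ) (δ : ℝ) (hδ0 : 0 < δ) (hδ1 : δ < 1) :
    1 - Real.exp (-δ) - ((L + 2 : ℝ) / ((L + 1).factorial * (L + 1)))
      ≤ ∑ t ∈ Finset.range L, (-1 : ℝ) ^ t * (δ ^ (t + 1) / (t + 1).factorial) := by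
  have habs : |(-δ)| ≤ 1 := by rw [abs_neg, abs_of_pos hδ0]; linarith
  have hb := Real.exp_bound habs (Nat.succ_pos L)
  set A : ℝ := ∑ i ∈ Finset.range (L + 1), (-δ) ^ i / i.factorial with hA
  have hid : A = 1 - ∑ t ∈ Finset.range L, (-1 : ℝ) ^ t * (δ ^ (t + 1) / (t + 1).factorial) := by
    rw [hA, Finset.sum_range_succ']
    simp only [pow_zero, Nat.factorial_zero, Nat.cast_one, div_one]
    have : ∀ t, (-δ) ^ (t + 1) / ((t + 1).factorial : ℝ)
        = -((-1 : ℝ) ^ t * (δ ^ (t + 1) / (t + 1).factorial)) := by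
      intro t
      rw [show (-δ) ^ (t + 1) = (-1 : ℝ) ^ (t + 1) * δ ^ (t + 1) by rw [← neg_one_mul, mul_pow]]
      rw [pow_succ]
      ring
    simp_rw [this]
    rw [Finset.sum_neg_distrib]
    ring
  have hpow : |(-δ)| ^ (L + 1) ≤ 1 := pow_le_one₀ (abs_nonneg _) habs
  have hpos : (0 : ℝ) ≤ ((L + 1).succ : ℝ) / ((L + 1).factorial * (L + 1)) := by positivity
  have hb2 : |Real.exp (-δ) - A| ≤ ((L + 2 : ℝ) / ((L + 1).factorial * (L + 1))) := by
    refine le_trans hb ?_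
    have heq : ((L.succ.succ : ℕ) : ℝ) / (((L.succ).factorial : ℝ) * (L.succ : ℕ))
        = ((L + 2 : ℝ) / ((L + 1).factorial * (L + 1))) := by push_cast; ring
    refine le_trans (mul_le_mul_of_nonneg_right (pow_le_one₀ (abs_nonneg _) habs)
      (by positivity)) ?_
    rw [one_mul]
    exact le_of_eq heq
  have := abs_le.mp hb2
  linarith [hid ▸ this.1, hid ▸ this.2, (abs_le.mp hb2).1]

-- choice of even depth L
lemma exists_depth (δ : ℝ) (hδ0 : 0 < δ) (hδ1 : δ < 1) :
    ∃ L : ℕ, Even L ∧ (1 - Real.exp (-1)) * δ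
      ≤ ∑ t ∈ Finset.range L, (-1 : ℝ) ^ t * (δ ^ (t + 1) / (t + 1).factorial) := by
  have hconv := strictConvexOn_exp.2 (Set.mem_univ (0 : ℝ)) (Set.mem_univ (-1 : ℝ))
    (by norm_num) (by linarith : (0:ℝ) < 1 - δ) hδ0 (by ring)
  simp only [smul_eq_mul, mul_zero, mul_neg, mul_one, zero_add, Real.exp_zero] at hconv
  -- hconv : Real.exp (-δ) < (1 - δ) * 1 + δ * Real.exp (-1)
  set γ : ℝ := 1 - Real.exp (-δ) - (1 - Real.exp (-1)) * δ with hγ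
  have hγ0 : 0 < γ := by rw [hγ]; nlinarith [hconv]
  obtain ⟨K, hK⟩ := exists_nat_gt (2 / γ)
  refine ⟨2 * K, even_two_mul K, ?_⟩
  have hKpos : (0 : ℝ) < K := lt_of_le_of_lt (by positivity) hK
  have heps : ((2 * K + 2 : ℝ) / ((2 * K + 1).factorial * (2 * K + 1))) ≤ γ := by
    have h1 : ((2 * K + 1 : ℕ) : ℝ) ≤ ((2 * K + 1).factorial : ℝ) := by
      exact_mod_cast Nat.self_le_factorial _
    have h2 : ((2 * K + 2 : ℝ) / ((2 * K + 1).factorial * (2 * K + 1)))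
        ≤ (2 * K + 2 : ℝ) / ((2 * K + 1) * (2 * K + 1)) := by
      apply div_le_div_of_nonneg_left (by positivity) (by positivity)
      apply mul_le_mul_of_nonneg_right _ (by positivity)
      exact_mod_cast h1
    have h3 : (2 * K + 2 : ℝ) / ((2 * K + 1) * (2 * K + 1)) ≤ 2 / K := by
      rw [div_le_div_iff₀ (by positivity) hKpos]
      nlinarith
    have h4 : (2 : ℝ) / K ≤ γ := by
      rw [div_le_iff₀ hKpos]
      rw [div_lt_iff₀ hγ0] at hK
      nlinarith
    linarith
  have := Lsum_ge (2 * K) δ hδ0 hδ1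
  push_cast at this heps ⊢
  linarith

lemma hc_nat (δ : ℝ) (hδ0 : 0 < δ) (hδ1 : δ < 1) {m : ℕ} (hm : 2 ≤ m) :
    m * (m - 1) ^ (Nm δ m) ≤ m ^ (Nm δ m) := by
  set N := Nm δ m with hNdef
  have hmR : (0 : ℝ) < m := by
    have : 0 < m := by omega
    exact_mod_cast this
  have hmd : (0 : ℝ) < (m : ℝ) / δ := by positivity
  have hN : (m : ℝ) * Real.log ((m : ℝ) / δ) ≤ (N : ℝ) := by
    rw [hNdef, Nm]; exact Nat.le_ceil _
  have h1 : ((m : ℝ) - 1) ≤ (m : ℝ) * Real.exp (-(1 / (m : ℝ))) := by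
    have h := Real.add_one_le_exp (-(1 / (m : ℝ)))
    have h2 : (m : ℝ) * (-(1 / (m : ℝ)) + 1) ≤ (m : ℝ) * Real.exp (-(1 / (m : ℝ))) :=
      mul_le_mul_of_nonneg_left h (le_of_lt hmR)
    have h3 : (m : ℝ) * (-(1 / (m : ℝ)) + 1) = (m : ℝ) - 1 := by field_simp; ring
    linarith
  have hm1 : (0 : ℝ) ≤ (m : ℝ) - 1 := by
    have : (1 : ℝ) ≤ m := by exact_mod_cast (by omega : 1 ≤ m)
    linarith
  have h2 : ((m : ℝ) - 1) ^ N ≤ ((m : ℝ) * Real.exp (-(1 / m))) ^ N :=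
    pow_le_pow_left₀ hm1 h1 N
  have h3 : ((m : ℝ) * Real.exp (-(1 / m))) ^ N
      = (m : ℝ) ^ N * Real.exp ((N : ℝ) * -(1 / m)) := by
    rw [mul_pow, Real.exp_nat_mul]
  have h4 : Real.exp ((N : ℝ) * -(1 / m)) ≤ Real.exp (-Real.log ((m : ℝ) / δ)) := by
    apply Real.exp_le_exp.mpr
    have h5 : Real.log ((m : ℝ) / δ) ≤ (N : ℝ) / m := by
      rw [le_div_iff₀ hmR]
      calc Real.log ((m : ℝ) / δ) * m = (m : ℝ) * Real.log ((m : ℝ) / δ) := by ring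
        _ ≤ N := hN
    have h6 : (N : ℝ) * -(1 / m) = -((N : ℝ) / m) := by field_simp
    linarith
  have h7 : Real.exp (-Real.log ((m : ℝ) / δ)) = δ / m := by
    rw [Real.exp_neg, Real.exp_log hmd, inv_div]
  have hfinal : (m : ℝ) * ((m : ℝ) - 1) ^ N ≤ (m : ℝ) ^ N := by
    calc (m : ℝ) * ((m : ℝ) - 1) ^ N
        ≤ (m : ℝ) * ((m : ℝ) ^ N * Real.exp ((N : ℝ) * -(1 / m))) := by
          apply mul_le_mul_of_nonneg_left _ (le_of_lt hmR)
          rw [← h3]; exact h2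
      _ ≤ (m : ℝ) * ((m : ℝ) ^ N * (δ / m)) := by
          apply mul_le_mul_of_nonneg_left _ (le_of_lt hmR)
          apply mul_le_mul_of_nonneg_left _ (by positivity)
          rw [← h7]; exact h4
      _ = δ * (m : ℝ) ^ N := by field_simp
      _ ≤ 1 * (m : ℝ) ^ N := by
          apply mul_le_mul_of_nonneg_right (le_of_lt hδ1) (by positivity)
      _ = (m : ℝ) ^ N := one_mul _
  have hcast : ((m * (m - 1) ^ N : ℕ) : ℝ) ≤ ((m ^ N : ℕ) : ℝ) := by
    push_cast [Nat.cast_sub (by omega : 1 ≤ m)]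
    exact hfinal
  exact_mod_cast hcast

lemma risk_lb (δ : ℝ) (hδ0 : 0 < δ) (hδ1 : δ < 1) {L m nn : ℕ} (hL : Even L)
    (hm : 2 ≤ m) (hLm : L ≤ m) (hnm : nn ≤ Nm δ m)
    (A : Set (Fin nn → Fin m)) :
    ENNReal.ofReal (∑ t ∈ Finset.range L,
        (-1 : ℝ) ^ t * (m.choose (t + 1)) * (((m : ℝ) - (t + 1)) / m) ^ (Nm δ m))
      ≤ P0 m nn A + (m : ℝ≥0∞)⁻¹ * ∑ i, P1 m nn i Aᶜ := by
  haveI := mu0_prob (le_trans one_le_two hm)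
  have hmeas : Measurable (fun x : Fin (Nm δ m) → Fin m => x ∘ Fin.castLE hnm) :=
    measurable_pi_lambda _ (fun i => measurable_pi_apply _)
  have e0 : P0 m nn A
      = P0 m (Nm δ m) ((fun x : Fin (Nm δ m) → Fin m => x ∘ Fin.castLE hnm) ⁻¹' A) := by
    rw [P0, ← map_cast hnm (mu0 m), Measure.map_apply hmeas (meas_all A)]
    rfl
  have e1 : ∀ i : Fin m, P1 m nn i Aᶜ
      = P1 m (Nm δ m) i (((fun x : Fin (Nm δ m) → Fin m => x ∘ Fin.castLE hnm) ⁻¹' A)ᶜ) := by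
    intro i
    haveI := mu1_prob hm i
    rw [P1, ← map_cast hnm (mu1 m i), Measure.map_apply hmeas (meas_all _), Set.preimage_compl]
    rfl
  rw [e0]
  rw [Finset.sum_congr rfl (fun i _ => e1 i)]
  exact le_trans (P0_M_ge (le_trans one_le_two hm) hL hLm)
    (stepB hm (hc_nat δ hδ0 hδ1 hm) _)

lemma est_lb (δ : ℝ) (hδ0 : 0 < δ) (hδ1 : δ < 1) {L m nn : ℕ} (hL : Even L)
    (hm : 2 ≤ m) (hLm : L ≤ m) (hnm : nn ≤ Nm δ m)
    (Nhat : (Fin nn → Fin m) → ℕ) :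
    ENNReal.ofReal ((∑ t ∈ Finset.range L,
        (-1 : ℝ) ^ t * (m.choose (t + 1)) * (((m : ℝ) - (t + 1)) / m) ^ (Nm δ m)) / 2)
      ≤ max (P0 m nn {x | Nhat x ≠ m}) (⨆ i : Fin m, P1 m nn i {x | Nhat x ≠ m - 1}) := by
  classical
  set A : Set (Fin nn → Fin m) := {x | Nhat x ≠ m} with hA
  set S : ℝ≥0∞ := ⨆ i : Fin m, P1 m nn i {x | Nhat x ≠ m - 1} with hS
  have hrisk := risk_lb δ hδ0 hδ1 hL hm hLm hnm A
  have hsub : Aᶜ ⊆ {x : Fin nn → Fin m | Nhat x ≠ m - 1} := by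
    intro x hx
    simp only [hA, Set.mem_compl_iff, Set.mem_setOf_eq, not_not] at hx
    simp only [Set.mem_setOf_eq, hx]
    omega
  have hsum : (m : ℝ≥0∞)⁻¹ * ∑ i, P1 m nn i Aᶜ ≤ S := by
    have h1 : ∀ i : Fin m, P1 m nn i Aᶜ ≤ S := fun i =>
      le_trans (measure_mono hsub) (le_iSup (fun i' => P1 m nn i' {x | Nhat x ≠ m - 1}) i)
    have hm0 : (m : ℝ≥0∞) ≠ 0 := by exact_mod_cast (by omega : m ≠ 0)
    calc (m : ℝ≥0∞)⁻¹ * ∑ i, P1 m nn i Aᶜ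
        ≤ (m : ℝ≥0∞)⁻¹ * ∑ _i : Fin m, S :=
          mul_le_mul_right (Finset.sum_le_sum (fun i _ => h1 i)) _
      _ = (m : ℝ≥0∞)⁻¹ * ((m : ℝ≥0∞) * S) := by
          rw [Finset.sum_const, Finset.card_univ, Fintype.card_fin, nsmul_eq_mul]
      _ = S := by rw [← mul_assoc, ENNReal.inv_mul_cancel hm0 (by simp), one_mul]
  have hmax : ENNReal.ofReal (∑ t ∈ Finset.range L,
      (-1 : ℝ) ^ t * (m.choose (t + 1)) * (((m : ℝ) - (t + 1)) / m) ^ (Nm δ m))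
      ≤ max (P0 m nn A) S * 2 := by
    calc ENNReal.ofReal _ ≤ P0 m nn A + (m : ℝ≥0∞)⁻¹ * ∑ i, P1 m nn i Aᶜ := hrisk
      _ ≤ max (P0 m nn A) S + max (P0 m nn A) S :=
          add_le_add (le_max_left _ _) (le_trans hsum (le_max_right _ _))
      _ = max (P0 m nn A) S * 2 := (mul_two _).symm
  rw [ENNReal.ofReal_div_of_pos two_pos]
  have h2 : ENNReal.ofReal (2 : ℝ) = 2 := by norm_num
  rw [h2]
  exact ENNReal.div_le_of_le_mul hmax

end HomologyLB

/-- Sample complexity lower bound for homology inference (combinatorial core):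
fix `δ ∈ (0,1)`.  Model: `P₀` is uniform over `m` equal-mass components
(represented by their labels, so `P₀ = (1/m)·count` on `Fin m`), and the `i`-th
alternative `P₁ i = (1/(m-1))·count⌞{i}ᶜ` is `P₀` conditioned on missing
component `i`; under `P₀` the null manifold has `m` connected components and
under each alternative it has `m - 1`.  If the sample size satisfies
`n(m) ≤ m·log m + m·log(1/δ)`, then (1) the optimal total risk (Type I plus
average Type II error under the uniform prior) of any test between `H₀` and the
uniform mixture of the `m` one-component-removed alternatives is at least
`(1 - e⁻¹)·δ` in the limit `m → ∞`, and (2) the minimax risk for estimating the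
number of connected components is at least `((1 - e⁻¹)/2)·δ` in the limit. -/
theorem homology_inference_lower_bound (δ : ℝ) (hδ0 : 0 < δ) (hδ1 : δ < 1)
    (n : ℕ → ℕ)
    (hn : ∀ m : ℕ, (n m : ℝ) ≤ (m : ℝ) * Real.log m + (m : ℝ) * Real.log (1 / δ)) :
    ENNReal.ofReal ((1 - Real.exp (-1)) * δ) ≤
      Filter.liminf
        (fun m : ℕ =>
          ⨅ A : Set (Fin (n m) → Fin m),
            (Measure.pi fun _ : Fin (n m) => ((m : ℝ≥0∞)⁻¹ • Measure.count : Measure (Fin m))) A +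
              (m : ℝ≥0∞)⁻¹ * ∑ i : Fin m,
                (Measure.pi fun _ : Fin (n m) =>
                  (((m - 1 : ℕ) : ℝ≥0∞)⁻¹ • Measure.count.restrict {i}ᶜ : Measure (Fin m))) Aᶜ)
        atTop ∧
    ENNReal.ofReal ((1 - Real.exp (-1)) / 2 * δ) ≤
      Filter.liminf
        (fun m : ℕ =>
          ⨅ Nhat : (Fin (n m) → Fin m) → ℕ,
            max
              ((Measure.pi fun _ : Fin (n m) => ((m : ℝ≥0∞)⁻¹ • Measure.count : Measure (Fin m)))
                {x | Nhat x ≠ m})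
              (⨆ i : Fin m,
                (Measure.pi fun _ : Fin (n m) =>
                  (((m - 1 : ℕ) : ℝ≥0∞)⁻¹ • Measure.count.restrict {i}ᶜ : Measure (Fin m)))
                  {x | Nhat x ≠ m - 1}))
        atTop := by
  classical
  obtain ⟨L, hLev, hLge⟩ := HomologyLB.exists_depth δ hδ0 hδ1
  set Lsum : ℝ := ∑ t ∈ Finset.range L, (-1 : ℝ) ^ t * (δ ^ (t + 1) / (t + 1).factorial)
    with hLsum
  set bR : ℕ → ℝ := fun m => ∑ t ∈ Finset.range L,
    (-1 : ℝ) ^ t * (m.choose (t + 1)) * (((m : ℝ) - (t + 1)) / m) ^ (HomologyLB.Nm δ m)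
    with hbRdef
  have hbR : Tendsto bR atTop (nhds Lsum) := by
    rw [hbRdef, hLsum]
    apply tendsto_finset_sum
    intro t _
    have h := (HomologyLB.tendsto_term δ hδ0 hδ1 (t + 1)).const_mul ((-1 : ℝ) ^ t)
    refine h.congr (fun m => by push_cast; ring)
  have hnm : ∀ m : ℕ, 1 ≤ m → n m ≤ HomologyLB.Nm δ m := by
    intro m hm
    have hmR : (0 : ℝ) < m := by exact_mod_cast hm
    have heq : (m : ℝ) * Real.log m + m * Real.log (1 / δ)
        = m * Real.log ((m : ℝ) / δ) := by
      rw [Real.log_div (ne_of_gt hmR) (ne_of_gt hδ0), one_div, Real.log_inv]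
      ring
    have h2 : (n m : ℝ) ≤ (m : ℝ) * Real.log ((m : ℝ) / δ) := by
      have h3 := hn m
      rw [heq] at h3
      exact h3
    have h4 : (m : ℝ) * Real.log ((m : ℝ) / δ) ≤ ((HomologyLB.Nm δ m : ℕ) : ℝ) := by
      rw [HomologyLB.Nm]; exact Nat.le_ceil _
    exact_mod_cast le_trans h2 h4
  constructor
  · refine le_trans (ENNReal.ofReal_le_ofReal hLge) ?_
    have hlim : Tendsto (fun m => ENNReal.ofReal (bR m)) atTop
        (nhds (ENNReal.ofReal Lsum)) := (ENNReal.continuous_ofReal.tendsto _).comp hbR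
    rw [← hlim.liminf_eq]
    refine Filter.liminf_le_liminf ?_
    filter_upwards [eventually_ge_atTop 2, eventually_ge_atTop L] with m hm2 hmL
    refine le_iInf (fun A => ?_)
    exact HomologyLB.risk_lb δ hδ0 hδ1 hLev hm2 hmL (hnm m (by omega)) A
  · have hLge2 : (1 - Real.exp (-1)) / 2 * δ ≤ Lsum / 2 := by linarith
    refine le_trans (ENNReal.ofReal_le_ofReal hLge2) ?_
    have hbR2 : Tendsto (fun m => bR m / 2) atTop (nhds (Lsum / 2)) := hbR.div_const 2
    have hlim : Tendsto (fun m => ENNReal.ofReal (bR m / 2)) atTop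
        (nhds (ENNReal.ofReal (Lsum / 2))) := (ENNReal.continuous_ofReal.tendsto _).comp hbR2
    rw [← hlim.liminf_eq]
    refine Filter.liminf_le_liminf ?_
    filter_upwards [eventually_ge_atTop 2, eventually_ge_atTop L] with m hm2 hmL
    refine le_iInf (fun Nhat => ?_)
    exact HomologyLB.est_lb δ hδ0 hδ1 hLev hm2 hmL (hnm m (by omega)) Nhat
end
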